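/- arXiv:2108.11698 — 3 statements merged into one kernel-verified Lean document; each statement's English description precedes it below -/
import Mathlib

section
/- Let (X, d) be a proper, uniquely geodesic, straight metric space with basepoint b, let γ be a geodesic ray based at b, and let ξ ∈ Π_b^{-1}(γ), i.e. ξ is in the horoboundary and ξ(γ t) = −t for all t ≥ 0. Then there exists a continuous path α : [0,1] → C(X, ℝ) with α(0) = B_γ, α(1) = ξ, and α(s) ∈ Π_b^{-1}(γ) for every s ∈ [0,1]. -/
open Filter Topology
open scoped NNReal ENNReal

variable {X : Type*} [MetricSpace X]

/-- `γ` restricted to the set `s ⊆ ℝ` is a (unit-speed) geodesic: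
`dist (γ u) (γ v) = |u - v|` for all `u, v ∈ s`. -/
def IsGeodesicOn (γ : ℝ → X) (s : Set ℝ) : Prop :=
  ∀ u ∈ s, ∀ v ∈ s, dist (γ u) (γ v) = |u - v|

/-- `X` is uniquely geodesic: any two distinct points are joined by a geodesic
parametrized on `[0, dist a c]`, and any two such geodesics agree on that interval. -/
def UniquelyGeodesic (X : Type*) [MetricSpace X] : Prop :=
  ∀ a c : X, a ≠ c →
    ∃ γ : ℝ → X,
      (IsGeodesicOn γ (Set.Icc 0 (dist a c)) ∧ γ 0 = a ∧ γ (dist a c) = c) ∧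
        ∀ γ' : ℝ → X,
          (IsGeodesicOn γ' (Set.Icc 0 (dist a c)) ∧ γ' 0 = a ∧ γ' (dist a c) = c) →
            Set.EqOn γ' γ (Set.Icc 0 (dist a c))

/-- `X` is straight: every geodesic defined on a nondegenerate closed interval extends to a
unique bi-infinite geodesic (an isometric embedding of `ℝ`). -/
def Straight (X : Type*) [MetricSpace X] : Prop :=
  ∀ (γ : ℝ → X) (a c : ℝ), a < c → IsGeodesicOn γ (Set.Icc a c) →
    ∃! γ' : ℝ → X, Isometry γ' ∧ Set.EqOn γ' γ (Set.Icc a c)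

/-- The space `D_b` of geodesic rays based at `b`, as a subspace of `C(ℝ≥0, X)`
(with the compact-open topology, i.e. uniform convergence on compact sets). -/
abbrev GeodesicRay (X : Type*) [MetricSpace X] (b : X) :=
  {γ : C(ℝ≥0, X) // Isometry ⇑γ ∧ γ 0 = b}

/-- The horofunction embedding `h : X → C(X, ℝ)`, `h x y = d(x, y) - d(x, b)`. -/
noncomputable def horo (b x : X) : C(X, ℝ) :=
  ⟨fun y => dist x y - dist x b,
    (continuous_const.dist continuous_id).sub continuous_const⟩

/-- The horoboundary of `X` (with basepoint `b`): the closure of `h(X)` in `C(X, ℝ)`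
minus `h(X)`. -/
def horoboundary (b : X) : Set C(X, ℝ) :=
  closure (Set.range (horo b)) \ Set.range (horo b)

/-- The setoid on `D_b × M` identifying all points whose second coordinate is `0`. -/
def collapseSetoid (X : Type*) [MetricSpace X] (b : X) (M : Type*) [Zero M] :
    Setoid (GeodesicRay X b × M) where
  r p q := p = q ∨ (p.2 = 0 ∧ q.2 = 0)
  iseqv := by
    refine ⟨fun _ => Or.inl rfl, ?_, ?_⟩
    · rintro p q (rfl | ⟨h1, h2⟩)
      · exact Or.inl rfl
      · exact Or.inr ⟨h2, h1⟩
    · rintro p q r (rfl | ⟨h1, h2⟩) (rfl | ⟨h3, h4⟩)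
      · exact Or.inl rfl
      · exact Or.inr ⟨h3, h4⟩
      · exact Or.inr ⟨h1, h2⟩
      · exact Or.inr ⟨h1, h4⟩

/-- The visual compactification `X̄_b = (D_b × [0, ∞]) / (D_b × {0})`. -/
abbrev VisualCompactification (X : Type*) [MetricSpace X] (b : X) :=
  Quotient (collapseSetoid X b ℝ≥0∞)

/-- `X` is C¹ along geodesics: for a bi-infinite geodesic `γ` and a point `p` off `γ`,
`t ↦ d(γ t, p)` is differentiable, and the derivative depends continuously on `(t, p)`. -/
def C1AlongGeodesics (X : Type*) [MetricSpace X] : Prop :=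
  ∀ γ : ℝ → X, Isometry γ →
    (∀ p, p ∉ Set.range γ → ∀ t : ℝ, DifferentiableAt ℝ (fun s => dist (γ s) p) t) ∧
      ContinuousOn (fun q : ℝ × X => deriv (fun s => dist (γ s) q.2) q.1)
        {q : ℝ × X | q.2 ∉ Set.range γ}

/-- `X` has constant distance variation: for distinct bi-infinite geodesics `γ, η` with
`γ 0 = η 0`, either `(d/dt) d(γ t, η s)|_{t=0}` exists for all `s > 0` and is independent
of `s`, or it exists for no `s > 0`. -/
def ConstantDistanceVariation (X : Type*) [MetricSpace X] : Prop :=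
  ∀ γ η : ℝ → X, Isometry γ → Isometry η → γ 0 = η 0 → γ ≠ η →
    ((∀ s : ℝ, 0 < s → DifferentiableAt ℝ (fun t => dist (γ t) (η s)) 0) ∧
        ∀ s s' : ℝ, 0 < s → 0 < s' →
          deriv (fun t => dist (γ t) (η s)) 0 = deriv (fun t => dist (γ t) (η s')) 0) ∨
      ∀ s : ℝ, 0 < s → ¬ DifferentiableAt ℝ (fun t => dist (γ t) (η s)) 0

namespace St14


lemma horo_apply (b x y : X) : horo b x y = dist x y - dist x b := rfl

lemma abs_horo_le (b x p : X) : |horo b x p| ≤ dist p b := by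
  rw [horo_apply, dist_comm x p, dist_comm x b]
  exact abs_dist_sub_le p b x

lemma horo_lip (b x : X) : LipschitzWith 1 (horo b x) := by
  apply LipschitzWith.of_dist_le_mul
  intro p q
  have h1 : horo b x p - horo b x q = dist x p - dist x q := by
    rw [horo_apply, horo_apply]; ring
  rw [NNReal.coe_one, one_mul, Real.dist_eq, h1, dist_comm x p, dist_comm x q]
  exact abs_dist_sub_le p q x


lemma horo_lip_abs (b x : X) : ∀ a c : X, |horo b x a - horo b x c| ≤ dist a c := by
  intro a c
  have := (horo_lip b x).dist_le_mul a c
  rwa [NNReal.coe_one, one_mul, Real.dist_eq] at this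

/-- pointwise convergence of 1-Lipschitz maps to a 1-Lipschitz map implies convergence
in the compact-open topology. -/
lemma tendsto_cm_of_pointwise {ι : Type*} {l : Filter ι} {F : ι → C(X, ℝ)} {g : C(X, ℝ)}
    (hF : ∀ i p q, |F i p - F i q| ≤ dist p q) (hg : ∀ p q, |g p - g q| ≤ dist p q)
    (h : ∀ p, Tendsto (fun i => F i p) l (𝓝 (g p))) : Tendsto F l (𝓝 g) := by
  rw [ContinuousMap.tendsto_iff_forall_isCompact_tendstoUniformlyOn]
  intro K hK
  rw [Metric.tendstoUniformlyOn_iff]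
  intro ε hε
  have hε3 : 0 < ε / 3 := by linarith
  obtain ⟨s, hsfin, hsub⟩ := (Metric.totallyBounded_iff.mp hK.totallyBounded) (ε / 3) hε3
  have hev : ∀ᶠ i in l, ∀ y ∈ s, |F i y - g y| < ε / 3 := by
    rw [Filter.eventually_all_finite hsfin]
    intro y _
    have := (h y).eventually (Metric.ball_mem_nhds (g y) hε3)
    filter_upwards [this] with i hi
    rw [Real.dist_eq] at hi
    exact hi
  filter_upwards [hev] with i hi p hp
  obtain ⟨y, hy, hpy⟩ := Set.mem_iUnion₂.mp (hsub hp)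
  rw [Metric.mem_ball] at hpy
  have h1 := hg p y
  have h2 := hi y hy
  have h3 := hF i y p
  rw [Real.dist_eq]
  have : g p - F i p = (g p - g y) + (g y - F i y) + (F i y - F i p) := by ring
  calc |g p - F i p| = |(g p - g y) + (g y - F i y) + (F i y - F i p)| := by rw [this]
    _ ≤ |g p - g y| + |g y - F i y| + |F i y - F i p| := by
        exact (abs_add_le _ _).trans (by gcongr; exact abs_add_le _ _)
    _ < ε := by
        have h2' : |g y - F i y| < ε/3 := by rw [abs_sub_comm]; exact h2
        have := hpy
        rw [dist_comm] at hpy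
        nlinarith [h1, h3, hpy]


lemma horo_continuous (b : X) : Continuous (horo b) := by
  have hc : Continuous fun z : X × X => dist z.1 z.2 - dist z.1 b := by
    exact (continuous_fst.dist continuous_snd).sub (continuous_fst.dist continuous_const)
  have : horo b = fun x => (ContinuousMap.curry ⟨_, hc⟩) x := by
    funext x; ext y; rfl
  rw [this]
  exact (ContinuousMap.curry _).continuous

lemma closure_lip {b : X} {f : C(X, ℝ)} (hf : f ∈ closure (Set.range (horo b)))
    (p q : X) : |f p - f q| ≤ dist p q := by
  have hcl : IsClosed {g : C(X, ℝ) | |g p - g q| ≤ dist p q} := by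
    apply isClosed_le _ continuous_const
    exact ((continuous_eval_const p).sub
      (continuous_eval_const q)).abs
  have hsub : Set.range (horo b) ⊆ {g : C(X, ℝ) | |g p - g q| ≤ dist p q} := by
    rintro _ ⟨x, rfl⟩
    have := (horo_lip b x).dist_le_mul p q
    rw [NNReal.coe_one, one_mul, Real.dist_eq] at this
    exact this
  exact closure_minimal hsub hcl hf

lemma closure_base {b : X} {f : C(X, ℝ)} (hf : f ∈ closure (Set.range (horo b))) :
    f b = 0 := by
  have hcl : IsClosed {g : C(X, ℝ) | g b = 0} :=
    isClosed_eq (continuous_eval_const b) continuous_const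
  have hsub : Set.range (horo b) ⊆ {g : C(X, ℝ) | g b = 0} := by
    rintro _ ⟨x, rfl⟩
    exact sub_self _
  exact closure_minimal hsub hcl hf

/-- a function that decreases without bound along a ray is not of the form `horo b x`. -/
lemma opt_notMem {b : X} {Γ : ℝ≥0 → X} {f : C(X, ℝ)}
    (hopt : ∀ t : ℝ≥0, f (Γ t) = -(t : ℝ)) : f ∉ Set.range (horo b) := by
  rintro ⟨x, rfl⟩
  set t : ℝ≥0 := Real.toNNReal (dist x b) + 1 with ht
  have h1 : horo b x (Γ t) ≥ -dist x b := by
    rw [horo_apply]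
    have := dist_nonneg (x := x) (y := Γ t)
    linarith
  rw [hopt t] at h1
  have h2 : (t : ℝ) = dist x b + 1 := by
    rw [ht, NNReal.coe_add, Real.coe_toNNReal _ dist_nonneg, NNReal.coe_one]
  rw [h2] at h1
  linarith

section Gauge

variable (b : X) (xi Bg : C(X, ℝ)) (p : ℕ → X)

/-- weights for the gauge -/
noncomputable def gw (i : ℕ) : ℝ := (1/2) ^ i / (1 + dist (p i) b)

lemma gw_pos (i : ℕ) : 0 < gw b p i := by
  apply div_pos (by positivity)
  have := dist_nonneg (x := p i) (y := b); linarith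

/-- clamped value used in the gauge -/
noncomputable def gcl (i : ℕ) (f : C(X, ℝ)) : ℝ :=
  max 0 (min (f (p i)) (Bg (p i)) - xi (p i))

lemma gcl_nonneg (i : ℕ) (f : C(X, ℝ)) : 0 ≤ gcl xi Bg p i f := le_max_left _ _

variable (hxB : ∀ y, xi y ≤ Bg y) (hB2 : ∀ y, Bg y ≤ dist y b) (hx2 : ∀ y, -dist y b ≤ xi y)

include hxB in
lemma gcl_le (i : ℕ) (f : C(X, ℝ)) :
    gcl xi Bg p i f ≤ Bg (p i) - xi (p i) := by
  apply max_le
  · linarith [hxB (p i)]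
  · have : min (f (p i)) (Bg (p i)) ≤ Bg (p i) := min_le_right _ _
    linarith

lemma gcl_of_sandwich (i : ℕ) (f : C(X, ℝ)) (h1 : xi (p i) ≤ f (p i))
    (h2 : f (p i) ≤ Bg (p i)) : gcl xi Bg p i f = f (p i) - xi (p i) := by
  rw [gcl, min_eq_left h2, max_eq_right (by linarith)]

include hxB hB2 hx2 in
lemma gterm_le (i : ℕ) (f : C(X, ℝ)) :
    gw b p i * gcl xi Bg p i f ≤ 2 * (1/2) ^ i := by
  have h1 : gcl xi Bg p i f ≤ 2 * dist (p i) b := by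
    refine (gcl_le xi Bg p hxB i f).trans ?_
    have := hB2 (p i); have := hx2 (p i); linarith
  calc gw b p i * gcl xi Bg p i f ≤ gw b p i * (2 * dist (p i) b) := by
        exact mul_le_mul_of_nonneg_left h1 (gw_pos b p i).le
    _ = (1/2)^i * (2 * dist (p i) b / (1 + dist (p i) b)) := by rw [gw]; ring
    _ ≤ (1/2)^i * 2 := by
        apply mul_le_mul_of_nonneg_left _ (by positivity)
        rw [div_le_iff₀ (by positivity : (0:ℝ) < 1 + dist (p i) b)]
        have := dist_nonneg (x := p i) (y := b); nlinarith
    _ = 2 * (1/2)^i := by ring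

include hxB hB2 hx2 in
lemma gsummable (f : C(X, ℝ)) :
    Summable (fun i => gw b p i * gcl xi Bg p i f) := by
  apply Summable.of_nonneg_of_le
    (fun i => mul_nonneg (gw_pos b p i).le (gcl_nonneg xi Bg p i f))
    (gterm_le b xi Bg p hxB hB2 hx2 · f)
  exact (summable_geometric_two).mul_left 2

/-- the gauge functional -/
noncomputable def gauge (f : C(X, ℝ)) : ℝ := ∑' i, gw b p i * gcl xi Bg p i f

include hxB hB2 hx2 in
lemma gauge_continuous : Continuous (gauge b xi Bg p) := by
  apply continuous_tsum (u := fun i => 2 * (1/2)^i)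
  · intro i
    apply Continuous.mul continuous_const
    apply Continuous.max continuous_const
    exact ((continuous_eval_const (p i)).min continuous_const).sub continuous_const
  · exact (summable_geometric_two).mul_left 2
  · intro i f
    rw [Real.norm_eq_abs, abs_of_nonneg (mul_nonneg (gw_pos b p i).le (gcl_nonneg xi Bg p i f))]
    exact gterm_le b xi Bg p hxB hB2 hx2 i f

lemma gauge_nonneg (f : C(X, ℝ)) : 0 ≤ gauge b xi Bg p f :=
  tsum_nonneg fun i => mul_nonneg (gw_pos b p i).le (gcl_nonneg xi Bg p i f)

include hxB in
lemma gauge_of_xi : gauge b xi Bg p xi = 0 := by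
  rw [gauge]
  convert tsum_zero with i
  rw [gcl, min_eq_left (hxB (p i)), sub_self, max_self, mul_zero]

include hxB hB2 hx2 in
lemma gauge_mono (f f' : C(X, ℝ)) (hs1 : ∀ y, xi y ≤ f y) (hs2 : ∀ y, f y ≤ Bg y)
    (hs1' : ∀ y, xi y ≤ f' y) (hs2' : ∀ y, f' y ≤ Bg y) (hff' : ∀ y, f y ≤ f' y) (j : ℕ) :
    gw b p j * (f' (p j) - f (p j)) ≤ gauge b xi Bg p f' - gauge b xi Bg p f := by
  have hsum := gsummable b xi Bg p hxB hB2 hx2 f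
  have hsum' := gsummable b xi Bg p hxB hB2 hx2 f'
  have heq : ∀ i, gw b p i * gcl xi Bg p i f' - gw b p i * gcl xi Bg p i f
      = gw b p i * (f' (p i) - f (p i)) := by
    intro i
    rw [gcl_of_sandwich xi Bg p i f (hs1 _) (hs2 _),
      gcl_of_sandwich xi Bg p i f' (hs1' _) (hs2' _)]
    ring
  have h0 : gauge b xi Bg p f' - gauge b xi Bg p f = ∑' i, gw b p i * (f' (p i) - f (p i)) := by
    rw [gauge, gauge, ← Summable.tsum_sub hsum' hsum]
    exact tsum_congr heq
  rw [h0]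
  apply Summable.le_tsum _ j
  · intro i _
    exact mul_nonneg (gw_pos b p i).le (by linarith [hff' (p i)])
  · exact ((hsum'.sub hsum).congr heq)

include hxB hB2 hx2 in
lemma gauge_gap (hdense : DenseRange p) (pt : X) {ε : ℝ} (hε : 0 < ε) :
    ∃ δ > 0, ∀ f f' : C(X, ℝ),
      (∀ y, xi y ≤ f y) → (∀ y, f y ≤ Bg y) → (∀ y, xi y ≤ f' y) → (∀ y, f' y ≤ Bg y) →
      (∀ y, f y ≤ f' y) →
      (∀ a c, |f a - f c| ≤ dist a c) → (∀ a c, |f' a - f' c| ≤ dist a c) →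
      gauge b xi Bg p f' - gauge b xi Bg p f < δ →
      f' pt - f pt < ε := by
  obtain ⟨j, hjd⟩ := hdense.exists_dist_lt pt (by positivity : (0:ℝ) < ε/4)
  refine ⟨gw b p j * (ε/2), mul_pos (gw_pos b p _) (by positivity), ?_⟩
  intro f f' hs1 hs2 hs1' hs2' hff' hlf hlf' hgap
  by_contra hcon
  push_neg at hcon
  have h1 := abs_le.mp (hlf pt (p j))
  have h2 := abs_le.mp (hlf' pt (p j))
  have h3 : f' (p j) - f (p j) ≥ ε/2 := by linarith [h1.1, h1.2, h2.1, h2.2]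
  have h5 := gauge_mono b xi Bg p hxB hB2 hx2 f f' hs1 hs2 hs1' hs2' hff' j
  have h6 : gw b p j * (ε/2) ≤ gw b p j * (f' (p j) - f (p j)) :=
    mul_le_mul_of_nonneg_left h3 (gw_pos b p j).le
  linarith

end Gauge

end St14

/-- Every point `ξ` of the fiber `Π_b⁻¹ (γ)` is joined to the Busemann point
`B_γ` by a continuous path contained in the fiber. -/
theorem statement14 [ProperSpace X] (hU : UniquelyGeodesic X) (hS : Straight X) (b : X)
    (γ : GeodesicRay X b) (ξ : C(X, ℝ))
    (hξ : ξ ∈ horoboundary b) (hopt : ∀ t : ℝ≥0, ξ (γ.1 t) = -(t : ℝ))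
    (Bγ : C(X, ℝ))
    (hB : ∀ p : X, Tendsto (fun t : ℝ≥0 => dist (γ.1 t) p - (t : ℝ)) atTop (𝓝 (Bγ p))) :
    ∃ α : C(unitInterval, C(X, ℝ)), α 0 = Bγ ∧ α 1 = ξ ∧
      ∀ s : unitInterval, α s ∈ horoboundary b ∧ ∀ t : ℝ≥0, (α s) (γ.1 t) = -(t : ℝ) := by
  classical
  have hNX : Nonempty X := ⟨b⟩
  obtain ⟨Riso, R0⟩ := γ.2
  set R : ℝ≥0 → X := fun t => γ.1 t with hR
  have hR0 : R 0 = b := R0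
  have hRd : ∀ s t : ℝ≥0, dist (R s) (R t) = |(s:ℝ) - (t:ℝ)| := by
    intro s t
    have h1 : dist (γ.1 s) (γ.1 t) = dist s t := Riso.dist_eq s t
    rw [hR]
    simp only
    rw [h1, NNReal.dist_eq]
  have hRb : ∀ t : ℝ≥0, dist (R t) b = (t:ℝ) := by
    intro t
    rw [← hR0, hRd t 0]
    simp
  have hoptR : ∀ t : ℝ≥0, ξ (R t) = -(t:ℝ) := hopt
  -- Busemann function facts
  have hBmono : ∀ (pt : X) (s t : ℝ≥0), s ≤ t →
      dist (R t) pt - (t:ℝ) ≤ dist (R s) pt - (s:ℝ) := by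
    intro pt s t hst
    have h1 : dist (R t) pt ≤ dist (R t) (R s) + dist (R s) pt := dist_triangle _ _ _
    have h2 : dist (R t) (R s) = (t:ℝ) - (s:ℝ) := by
      rw [hRd, abs_of_nonneg]
      have := NNReal.coe_le_coe.mpr hst
      linarith
    linarith
  have hBR : ∀ pt : X, Tendsto (fun t : ℝ≥0 => dist (R t) pt - (t:ℝ)) atTop (𝓝 (Bγ pt)) := hB
  have hBle : ∀ (pt : X) (t : ℝ≥0), Bγ pt ≤ dist (R t) pt - (t:ℝ) := by
    intro pt t
    apply le_of_tendsto (hBR pt)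
    filter_upwards [eventually_ge_atTop t] with u hu
    exact hBmono pt t u hu
  have hB2 : ∀ y, Bγ y ≤ dist y b := by
    intro y
    have h1 := hBle y 0
    rw [hR0] at h1
    simpa [dist_comm] using h1
  have hBRs : ∀ s : ℝ≥0, Bγ (R s) = -(s:ℝ) := by
    intro s
    have hev : (fun _ : ℝ≥0 => -(s:ℝ)) =ᶠ[atTop] (fun u : ℝ≥0 => dist (R u) (R s) - (u:ℝ)) := by
      filter_upwards [eventually_ge_atTop s] with u hu
      rw [hRd u s, abs_of_nonneg (by exact_mod_cast sub_nonneg.mpr (NNReal.coe_le_coe.mpr hu))]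
      ring
    exact tendsto_nhds_unique (hBR (R s)) (Tendsto.congr' hev tendsto_const_nhds)
  have hBlip : ∀ a c : X, |Bγ a - Bγ c| ≤ dist a c := by
    intro a c
    have h1 : Tendsto (fun u : ℝ≥0 => (dist (R u) a - (u:ℝ)) - (dist (R u) c - (u:ℝ)))
        atTop (𝓝 (Bγ a - Bγ c)) := (hBR a).sub (hBR c)
    apply le_of_tendsto h1.abs
    apply Eventually.of_forall
    intro u
    have h2 : (dist (R u) a - (u:ℝ)) - (dist (R u) c - (u:ℝ)) = dist a (R u) - dist c (R u) := by
      rw [dist_comm a (R u), dist_comm c (R u)]; ring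
    rw [h2]
    exact abs_dist_sub_le a c (R u)
  -- ξ facts
  have hxlip : ∀ a c : X, |ξ a - ξ c| ≤ dist a c := fun a c => St14.closure_lip hξ.1 a c
  have hxb : ξ b = 0 := St14.closure_base hξ.1
  have hx2 : ∀ y, -dist y b ≤ ξ y := by
    intro y
    have h1 := abs_le.mp (hxlip y b)
    rw [hxb] at h1
    linarith [h1.1]
  have hxB : ∀ y, ξ y ≤ Bγ y := by
    intro y
    apply ge_of_tendsto (hBR y)
    apply Eventually.of_forall
    intro t
    have h1 := abs_le.mp (hxlip y (R t))
    rw [hoptR t] at h1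
    rw [dist_comm] at h1
    linarith [h1.2]
  have hBtendC : Tendsto (fun t : ℝ≥0 => horo b (R t)) atTop (𝓝 Bγ) := by
    apply St14.tendsto_cm_of_pointwise (fun t => St14.horo_lip_abs b (R t)) hBlip
    intro pt
    apply Tendsto.congr _ (hBR pt)
    intro t
    rw [St14.horo_apply, hRb]
  have hBcl : Bγ ∈ closure (Set.range (horo b)) :=
    mem_closure_of_tendsto hBtendC (Eventually.of_forall fun t => Set.mem_range_self _)
  -- dense sequence
  obtain ⟨pseq, hdense⟩ : ∃ p : ℕ → X, DenseRange p :=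
    ⟨TopologicalSpace.denseSeq X, TopologicalSpace.denseRange_denseSeq X⟩
  -- trivial case
  by_cases hxiB : ξ = Bγ
  · refine ⟨ContinuousMap.const _ ξ, ?_, rfl, fun s => ⟨hξ, hopt⟩⟩
    rw [hxiB]; rfl
  -- main case
  set bbv : ℝ := St14.gauge b ξ Bγ pseq Bγ with hbbv
  have hbb : 0 < bbv := by
    rcases (St14.gauge_nonneg b ξ Bγ pseq Bγ).lt_or_eq with h | h
    · exact h
    · exfalso
      apply hxiB
      have hterm : ∀ i, ξ (pseq i) = Bγ (pseq i) := by
        intro i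
        have hnn : ∀ j, 0 ≤ St14.gw b pseq j * St14.gcl ξ Bγ pseq j Bγ :=
          fun j => mul_nonneg (St14.gw_pos b pseq j).le (St14.gcl_nonneg ξ Bγ pseq j Bγ)
        have h1 : St14.gw b pseq i * St14.gcl ξ Bγ pseq i Bγ ≤ 0 := by
          have := Summable.le_tsum (St14.gsummable b ξ Bγ pseq hxB hB2 hx2 Bγ) i (fun j _ => hnn j)
          rw [← St14.gauge] at this
          linarith [this, h.symm ▸ le_refl (0:ℝ)]
        have h2 : St14.gcl ξ Bγ pseq i Bγ = 0 := by
          have h3 := hnn i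
          have h4 : St14.gw b pseq i * St14.gcl ξ Bγ pseq i Bγ = 0 := le_antisymm h1 h3
          rcases mul_eq_zero.mp h4 with h5 | h5
          · exact absurd h5 (St14.gw_pos b pseq i).ne'
          · exact h5
        rw [St14.gcl_of_sandwich ξ Bγ pseq i Bγ (hxB _) (le_refl _)] at h2
        linarith
      have hfun : (ξ : X → ℝ) = Bγ := by
        apply Continuous.ext_on hdense ξ.continuous Bγ.continuous
        rintro _ ⟨i, rfl⟩
        exact hterm i
      exact ContinuousMap.ext fun y => congrFun hfun y
  -- the defect function and the filter
  set ef : X × ℝ≥0 → ℝ := fun q => dist q.1 (R q.2) - dist q.1 b + (q.2:ℝ) with hef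
  have hef0 : ∀ q, 0 ≤ ef q := by
    intro q
    have h1 : dist q.1 b ≤ dist q.1 (R q.2) + dist (R q.2) b := dist_triangle _ _ _
    rw [hRb] at h1
    simp only [hef]
    linarith
  set F0 : Filter (X × ℝ≥0) := (Filter.comap (fun q : X × ℝ≥0 => horo b q.1) (𝓝 ξ)) ⊓
      ((Filter.comap Prod.snd atTop) ⊓ (Filter.comap ef (𝓝 (0:ℝ)))) with hF0
  have hF0ne : F0.NeBot := by
    refine Filter.forall_mem_nonempty_iff_neBot.mp ?_
    intro S hS
    rw [hF0] at hS
    rcases Filter.mem_inf_iff.mp hS with ⟨A, hA, BC, hBC, rfl⟩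
    rcases Filter.mem_inf_iff.mp hBC with ⟨B, hB', C, hC, rfl⟩
    rcases Filter.mem_comap.mp hA with ⟨N, hN, hNsub⟩
    rcases Filter.mem_comap.mp hB' with ⟨Ts, hTs, hTsub⟩
    rcases Filter.mem_comap.mp hC with ⟨Es, hEs, hEsub⟩
    rcases Filter.mem_atTop_sets.mp hTs with ⟨T, hT⟩
    rcases Metric.mem_nhds_iff.mp hEs with ⟨δ, hδ, hball⟩
    have hVopen : IsOpen {f : C(X,ℝ) | |f (R T) - ξ (R T)| < δ} := by
      have hc : Continuous fun f : C(X,ℝ) => |f (R T) - ξ (R T)| :=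
        ((continuous_eval_const (R T)).sub continuous_const).abs
      exact isOpen_lt hc continuous_const
    have hVmem : {f : C(X,ℝ) | |f (R T) - ξ (R T)| < δ} ∈ 𝓝 ξ := by
      apply hVopen.mem_nhds
      simp [hδ]
    obtain ⟨f0, hf0mem, hf0r⟩ :=
      mem_closure_iff_nhds.mp hξ.1 _ (Filter.inter_mem hN hVmem)
    obtain ⟨x0, rfl⟩ := hf0r
    refine ⟨(x0, T), ?_, ?_⟩
    · apply hNsub
      exact hf0mem.1
    · constructor
      · apply hTsub
        exact hT T (le_refl T)
      · apply hEsub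
        apply hball
        have h1 : ef (x0, T) = horo b x0 (R T) + (T:ℝ) := by
          simp only [hef, St14.horo_apply]
        have h2 : |horo b x0 (R T) - ξ (R T)| < δ := hf0mem.2
        rw [hoptR T] at h2
        rw [Metric.mem_ball, Real.dist_eq, h1]
        calc |horo b x0 (R T) + (T:ℝ) - 0| = |horo b x0 (R T) - (-(T:ℝ))| := by ring_nf
          _ < δ := h2
  set U : Ultrafilter (X × ℝ≥0) := @Ultrafilter.of _ F0 hF0ne with hUdef
  have hUle : (U : Filter (X × ℝ≥0)) ≤ F0 := Ultrafilter.of_le F0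
  have T1 : Tendsto (fun q : X × ℝ≥0 => horo b q.1) (U : Filter (X × ℝ≥0)) (𝓝 ξ) :=
    Filter.tendsto_iff_comap.mpr (hUle.trans (by rw [hF0]; exact inf_le_left))
  have T2 : Tendsto (fun q : X × ℝ≥0 => q.2) (U : Filter (X × ℝ≥0)) atTop :=
    Filter.tendsto_iff_comap.mpr (hUle.trans (by rw [hF0]; exact le_trans inf_le_right inf_le_left))
  have T3 : Tendsto ef (U : Filter (X × ℝ≥0)) (𝓝 0) :=
    Filter.tendsto_iff_comap.mpr (hUle.trans (by rw [hF0]; exact le_trans inf_le_right inf_le_right))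
  -- geodesics between pairs of points
  have geo : ∀ x y : X, ∃ w : ℝ → X,
      IsGeodesicOn w (Set.Icc 0 (dist x y)) ∧ w 0 = x ∧ w (dist x y) = y := by
    intro x y
    by_cases hxy : x = y
    · subst hxy
      refine ⟨fun _ => x, ?_, rfl, rfl⟩
      intro u hu v hv
      rw [dist_self] at hu hv
      have hu' : u = 0 := le_antisymm hu.2 hu.1
      have hv' : v = 0 := le_antisymm hv.2 hv.1
      subst hu'; subst hv'
      simp [dist_self]
    · obtain ⟨w, hw, _⟩ := hU x y hxy
      exact ⟨w, hw⟩
  choose wfun hw_geo hw_0 hw_1 using geo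
  -- the gauge of the horofunction of a point
  set Ψ : X → ℝ := fun x => St14.gauge b ξ Bγ pseq (horo b x) with hΨdef
  have hGc : Continuous (St14.gauge b ξ Bγ pseq) := St14.gauge_continuous b ξ Bγ pseq hxB hB2 hx2
  have hΨc : Continuous Ψ := hGc.comp (St14.horo_continuous b)
  -- notations along geodesics from q.1 to R q.2
  set DD : X × ℝ≥0 → ℝ := fun q => dist q.1 (R q.2) with hDD
  set ww : X × ℝ≥0 → ℝ → X := fun q => wfun q.1 (R q.2) with hww
  have hD0 : ∀ q, (0:ℝ) ≤ DD q := fun q => dist_nonneg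
  have hwgeo : ∀ q : X × ℝ≥0, ∀ u ∈ Set.Icc (0:ℝ) (DD q), ∀ v ∈ Set.Icc (0:ℝ) (DD q),
      dist (ww q u) (ww q v) = |u - v| := fun q => hw_geo q.1 (R q.2)
  have hw0' : ∀ q : X × ℝ≥0, ww q 0 = q.1 := fun q => hw_0 q.1 (R q.2)
  have hwD : ∀ q : X × ℝ≥0, ww q (DD q) = R q.2 := fun q => hw_1 q.1 (R q.2)
  have hwcont : ∀ q : X × ℝ≥0, ContinuousOn (fun v => Ψ (ww q v)) (Set.Icc 0 (DD q)) := by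
    intro q
    apply hΨc.comp_continuousOn
    apply LipschitzOnWith.continuousOn (K := 1)
    apply LipschitzOnWith.of_dist_le_mul
    intro u hu v hv
    rw [hwgeo q u hu v hv, NNReal.coe_one, one_mul, Real.dist_eq]
  set PP : X × ℝ≥0 → ℝ → Prop := fun q g => Ψ q.1 < g ∧ g < Ψ (R q.2) with hPP
  set uu : X × ℝ≥0 → ℝ → ℝ :=
    fun q g => sInf {v | v ∈ Set.Icc (0:ℝ) (DD q) ∧ Ψ (ww q v) = g} with huu
  have hu_mem : ∀ q g, PP q g → uu q g ∈ Set.Icc (0:ℝ) (DD q) ∧ Ψ (ww q (uu q g)) = g := by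
    intro q g hP
    have hivt : ∃ v ∈ Set.Icc (0:ℝ) (DD q), Ψ (ww q v) = g := by
      have h1 : g ∈ Set.Icc (Ψ (ww q 0)) (Ψ (ww q (DD q))) := by
        rw [hw0' q, hwD q]
        exact ⟨hP.1.le, hP.2.le⟩
      obtain ⟨v, hv, hveq⟩ := intermediate_value_Icc (hD0 q) (hwcont q) h1
      exact ⟨v, hv, hveq⟩
    have hSne : {v | v ∈ Set.Icc (0:ℝ) (DD q) ∧ Ψ (ww q v) = g}.Nonempty := by
      obtain ⟨v, hv, hveq⟩ := hivt
      exact ⟨v, ⟨hv, hveq⟩⟩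
    have hSbdd : BddBelow {v | v ∈ Set.Icc (0:ℝ) (DD q) ∧ Ψ (ww q v) = g} :=
      ⟨0, fun v hv => hv.1.1⟩
    have hScl : IsClosed {v | v ∈ Set.Icc (0:ℝ) (DD q) ∧ Ψ (ww q v) = g} := by
      have heq : {v | v ∈ Set.Icc (0:ℝ) (DD q) ∧ Ψ (ww q v) = g}
          = Set.Icc (0:ℝ) (DD q) ∩ (fun v => Ψ (ww q v)) ⁻¹' {g} := by
        ext v
        rfl
      rw [heq]
      exact (hwcont q).preimage_isClosed_of_isClosed isClosed_Icc isClosed_singleton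
    have hmem := hScl.csInf_mem hSne hSbdd
    exact ⟨hmem.1, hmem.2⟩
  have hu_mono : ∀ q g g', PP q g → PP q g' → g ≤ g' → uu q g ≤ uu q g' := by
    intro q g g' hP hP' hgg
    obtain ⟨hmem', heq'⟩ := hu_mem q g' hP'
    have h1 : g ∈ Set.Icc (Ψ (ww q 0)) (Ψ (ww q (uu q g'))) := by
      rw [hw0' q, heq']
      exact ⟨hP.1.le, hgg⟩
    have hsub : Set.Icc (0:ℝ) (uu q g') ⊆ Set.Icc (0:ℝ) (DD q) :=
      Set.Icc_subset_Icc (le_refl _) hmem'.2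
    obtain ⟨v, hv, hveq⟩ := intermediate_value_Icc hmem'.1 ((hwcont q).mono hsub) h1
    have hbdd : BddBelow {v | v ∈ Set.Icc (0:ℝ) (DD q) ∧ Ψ (ww q v) = g} :=
      ⟨0, fun z hz => hz.1.1⟩
    have hvmem : v ∈ {v | v ∈ Set.Icc (0:ℝ) (DD q) ∧ Ψ (ww q v) = g} := ⟨hsub hv, hveq⟩
    exact (csInf_le hbdd hvmem).trans hv.2
  -- geodesic estimates
  have hE2 : ∀ q : X × ℝ≥0, ∀ u ∈ Set.Icc (0:ℝ) (DD q), dist (ww q u) q.1 = u := by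
    intro q u hu
    have h1 := hwgeo q u hu 0 ⟨le_refl _, hD0 q⟩
    rw [hw0' q] at h1
    rw [h1, sub_zero, abs_of_nonneg hu.1]
  have hE3 : ∀ q : X × ℝ≥0, ∀ u ∈ Set.Icc (0:ℝ) (DD q), dist (ww q u) (R q.2) = DD q - u := by
    intro q u hu
    have h1 := hwgeo q u hu (DD q) ⟨hD0 q, le_refl _⟩
    rw [hwD q] at h1
    rw [h1, abs_of_nonpos (by linarith [hu.2])]
    ring
  have hDD_ef : ∀ q : X × ℝ≥0, DD q = dist q.1 b - (q.2:ℝ) + ef q := by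
    intro q
    simp only [hef, hDD]
    ring
  have hE5 : ∀ q : X × ℝ≥0, ∀ u ∈ Set.Icc (0:ℝ) (DD q),
      dist (ww q u) b ≤ dist q.1 b + ef q - u := by
    intro q u hu
    have h1 : dist (ww q u) b ≤ dist (ww q u) (R q.2) + dist (R q.2) b := dist_triangle _ _ _
    rw [hE3 q u hu, hRb] at h1
    have h2 := hDD_ef q
    linarith
  have hE4 : ∀ q : X × ℝ≥0, ∀ u ∈ Set.Icc (0:ℝ) (DD q),
      dist q.1 b - u ≤ dist (ww q u) b := by
    intro q u hu
    have h1 : dist q.1 b ≤ dist q.1 (ww q u) + dist (ww q u) b := dist_triangle _ _ _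
    rw [dist_comm q.1 (ww q u), hE2 q u hu] at h1
    linarith
  have hE6 : ∀ q : X × ℝ≥0, ∀ u ∈ Set.Icc (0:ℝ) (DD q), ∀ v ∈ Set.Icc (0:ℝ) (DD q), u ≤ v →
      ∀ pt : X, horo b (ww q u) pt - ef q ≤ horo b (ww q v) pt := by
    intro q u hu v hv huv pt
    have h1 : dist (ww q u) pt ≤ (v - u) + dist (ww q v) pt := by
      have h2 := dist_triangle (ww q u) (ww q v) pt
      rw [hwgeo q u hu v hv, abs_of_nonpos (by linarith)] at h2
      linarith
    have h2 := hE5 q v hv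
    have h3 := hE4 q u hu
    rw [St14.horo_apply, St14.horo_apply]
    linarith
  have hE7 : ∀ q : X × ℝ≥0, ∀ u ∈ Set.Icc (0:ℝ) (DD q), ∀ s : ℝ≥0, (s:ℝ) ≤ (q.2:ℝ) →
      -(s:ℝ) ≤ horo b (ww q u) (R s) ∧ horo b (ww q u) (R s) ≤ -(s:ℝ) + ef q := by
    intro q u hu s hs
    constructor
    · have h1 : dist (ww q u) b ≤ dist (ww q u) (R s) + dist (R s) b := dist_triangle _ _ _
      rw [hRb] at h1
      rw [St14.horo_apply]
      linarith
    · have h1 : dist (ww q u) (R s) ≤ dist (ww q u) (R q.2) + dist (R q.2) (R s) :=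
        dist_triangle _ _ _
      rw [hE3 q u hu, hRd] at h1
      rw [abs_of_nonneg (by linarith)] at h1
      have h3 := hE4 q u hu
      have h4 := hDD_ef q
      rw [St14.horo_apply]
      linarith
  -- Z points and ultrafilter limits
  set Z : X × ℝ≥0 → ℝ → X := fun q g => if PP q g then ww q (uu q g) else q.1 with hZdef
  have hlim : ∀ g : ℝ, ∃ Th : X → ℝ, ∀ pt,
      Tendsto (fun q => horo b (Z q g) pt) (U : Filter (X × ℝ≥0)) (𝓝 (Th pt)) := by
    intro g
    have hex : ∀ pt : X, ∃ L : ℝ,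
        Tendsto (fun q => horo b (Z q g) pt) (U : Filter (X × ℝ≥0)) (𝓝 L) := by
      intro pt
      obtain ⟨L, _, hL⟩ := (isCompact_Icc (a := -dist pt b) (b := dist pt b)).ultrafilter_le_nhds
        (U.map (fun q => horo b (Z q g) pt))
        (Filter.le_principal_iff.mpr (Filter.mem_map.mpr (Filter.univ_mem'
          (fun q => Set.mem_Icc.mpr (abs_le.mp (St14.abs_horo_le b (Z q g) pt))))))
      exact ⟨L, hL⟩
    choose Th hTh using hex
    exact ⟨Th, hTh⟩
  choose Th hTh using hlim
  -- eventual facts along the ultrafilter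
  have hΨ1 : Tendsto (fun q : X × ℝ≥0 => Ψ q.1) (U : Filter (X × ℝ≥0)) (𝓝 0) := by
    have h1 := (hGc.tendsto ξ).comp T1
    rwa [St14.gauge_of_xi b ξ Bγ pseq hxB] at h1
  have hΨ2 : Tendsto (fun q : X × ℝ≥0 => Ψ (R q.2)) (U : Filter (X × ℝ≥0)) (𝓝 bbv) := by
    have h1 : Tendsto (fun q : X × ℝ≥0 => horo b (R q.2)) (U : Filter (X × ℝ≥0)) (𝓝 Bγ) :=
      hBtendC.comp T2
    exact (hGc.tendsto Bγ).comp h1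
  have evP : ∀ g : ℝ, 0 < g → g < bbv → ∀ᶠ q in (U : Filter (X × ℝ≥0)), PP q g := by
    intro g hg0 hgb
    filter_upwards [hΨ1.eventually_lt_const hg0, hΨ2.eventually_const_lt hgb] with q h1 h2
    exact ⟨h1, h2⟩
  have hZP : ∀ g : ℝ, 0 < g → g < bbv →
      ∀ᶠ q in (U : Filter (X × ℝ≥0)), Z q g = ww q (uu q g) ∧ PP q g := by
    intro g hg0 hgb
    filter_upwards [evP g hg0 hgb] with q hq
    exact ⟨if_pos hq, hq⟩
  -- properties of the limit functions
  have c4 : ∀ (g : ℝ) (a c : X), |Th g a - Th g c| ≤ dist a c := by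
    intro g a c
    have h1 : Tendsto (fun q => horo b (Z q g) a - horo b (Z q g) c)
        (U : Filter (X × ℝ≥0)) (𝓝 (Th g a - Th g c)) := (hTh g a).sub (hTh g c)
    apply le_of_tendsto h1.abs
    exact Eventually.of_forall fun q => St14.horo_lip_abs b (Z q g) a c
  have c1 : ∀ g : ℝ, 0 < g → g < bbv → ∀ pt, ξ pt ≤ Th g pt := by
    intro g hg0 hgb pt
    have hlhs : Tendsto (fun q : X × ℝ≥0 => horo b q.1 pt - ef q)
        (U : Filter (X × ℝ≥0)) (𝓝 (ξ pt)) := by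
      have h1 : Tendsto (fun q : X × ℝ≥0 => horo b q.1 pt)
          (U : Filter (X × ℝ≥0)) (𝓝 (ξ pt)) := ((continuous_eval_const pt).tendsto ξ).comp T1
      simpa using h1.sub T3
    apply le_of_tendsto_of_tendsto hlhs (hTh g pt)
    filter_upwards [hZP g hg0 hgb] with q hq
    obtain ⟨hZe, hPq⟩ := hq
    rw [hZe]
    have hm := hu_mem q g hPq
    have h0mem : (0:ℝ) ∈ Set.Icc (0:ℝ) (DD q) := ⟨le_refl _, hD0 q⟩
    have h6 := hE6 q 0 h0mem (uu q g) hm.1 hm.1.1 pt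
    rw [hw0' q] at h6
    exact h6
  have c2 : ∀ g g' : ℝ, 0 < g → g < bbv → 0 < g' → g' < bbv → g ≤ g' →
      ∀ pt, Th g pt ≤ Th g' pt := by
    intro g g' hg0 hgb hg0' hgb' hgg pt
    have hlhs : Tendsto (fun q : X × ℝ≥0 => horo b (Z q g) pt - ef q)
        (U : Filter (X × ℝ≥0)) (𝓝 (Th g pt)) := by
      simpa using (hTh g pt).sub T3
    apply le_of_tendsto_of_tendsto hlhs (hTh g' pt)
    filter_upwards [hZP g hg0 hgb, hZP g' hg0' hgb'] with q hq hq'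
    obtain ⟨hZe, hPq⟩ := hq
    obtain ⟨hZe', hPq'⟩ := hq'
    rw [hZe, hZe']
    have hm := hu_mem q g hPq
    have hm' := hu_mem q g' hPq'
    exact hE6 q (uu q g) hm.1 (uu q g') hm'.1 (hu_mono q g g' hPq hPq' hgg) pt
  have c3 : ∀ g : ℝ, 0 < g → g < bbv → ∀ s : ℝ≥0, Th g (R s) = -(s:ℝ) := by
    intro g hg0 hgb s
    have hev : ∀ᶠ q in (U : Filter (X × ℝ≥0)), |horo b (Z q g) (R s) + (s:ℝ)| ≤ ef q := by
      filter_upwards [hZP g hg0 hgb, T2.eventually_ge_atTop s] with q hq hts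
      obtain ⟨hZe, hPq⟩ := hq
      rw [hZe]
      have hm := hu_mem q g hPq
      have h7 := hE7 q (uu q g) hm.1 s (NNReal.coe_le_coe.mpr hts)
      rw [abs_le]
      constructor
      · linarith [hef0 q, h7.1]
      · linarith [h7.2]
    have h1 : Tendsto (fun q => |horo b (Z q g) (R s) + (s:ℝ)|)
        (U : Filter (X × ℝ≥0)) (𝓝 (|Th g (R s) + (s:ℝ)|)) :=
      ((hTh g (R s)).add tendsto_const_nhds).abs
    have h2 : |Th g (R s) + (s:ℝ)| ≤ 0 := le_of_tendsto_of_tendsto h1 T3 hev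
    have h3 : Th g (R s) + (s:ℝ) = 0 := abs_eq_zero.mp (le_antisymm h2 (abs_nonneg _))
    linarith
  have c8 : ∀ g : ℝ, 0 < g → g < bbv → ∀ pt, Th g pt ≤ Bγ pt := by
    intro g hg0 hgb pt
    apply ge_of_tendsto (hBR pt)
    apply Eventually.of_forall
    intro t
    have h1 := abs_le.mp (c4 g pt (R t))
    have h2 := c3 g hg0 hgb t
    rw [dist_comm pt (R t)] at h1
    linarith [h1.2]
  have hThcont : ∀ g : ℝ, Continuous (Th g) := by
    intro g
    apply LipschitzWith.continuous (K := 1)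
    apply LipschitzWith.of_dist_le_mul
    intro a c
    rw [NNReal.coe_one, one_mul, Real.dist_eq]
    exact c4 g a c
  set ΘC : ℝ → C(X, ℝ) := fun g => ⟨Th g, hThcont g⟩ with hΘC
  have c5 : ∀ g : ℝ, Tendsto (fun q => horo b (Z q g)) (U : Filter (X × ℝ≥0)) (𝓝 (ΘC g)) := by
    intro g
    exact St14.tendsto_cm_of_pointwise (fun q => St14.horo_lip_abs b (Z q g)) (c4 g) (hTh g)
  have c6 : ∀ g : ℝ, ΘC g ∈ closure (Set.range (horo b)) := fun g =>
    mem_closure_of_tendsto (c5 g) (Eventually.of_forall fun q => Set.mem_range_self _)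
  have c7 : ∀ g : ℝ, 0 < g → g < bbv → St14.gauge b ξ Bγ pseq (ΘC g) = g := by
    intro g hg0 hgb
    have h1 : Tendsto (fun q => St14.gauge b ξ Bγ pseq (horo b (Z q g)))
        (U : Filter (X × ℝ≥0)) (𝓝 (St14.gauge b ξ Bγ pseq (ΘC g))) :=
      (hGc.tendsto (ΘC g)).comp (c5 g)
    have h2 : Tendsto (fun q => St14.gauge b ξ Bγ pseq (horo b (Z q g)))
        (U : Filter (X × ℝ≥0)) (𝓝 g) := by
      have hev : (fun _ : X × ℝ≥0 => g) =ᶠ[(U : Filter (X × ℝ≥0))]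
          (fun q => St14.gauge b ξ Bγ pseq (horo b (Z q g))) := by
        filter_upwards [hZP g hg0 hgb] with q hq
        obtain ⟨hZe, hPq⟩ := hq
        rw [hZe]
        exact ((hu_mem q g hPq).2).symm
      exact Tendsto.congr' hev tendsto_const_nhds
    exact tendsto_nhds_unique h1 h2
  -- the interpolating family
  set A : ℝ → C(X, ℝ) := fun g => if g ≤ 0 then ξ else if bbv ≤ g then Bγ else ΘC g with hA
  have hAle0 : ∀ g : ℝ, g ≤ 0 → A g = ξ := by
    intro g h
    show (if g ≤ 0 then ξ else if bbv ≤ g then Bγ else ΘC g) = ξ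
    rw [if_pos h]
  have hAge : ∀ g : ℝ, bbv ≤ g → A g = Bγ := by
    intro g h
    have h0 : ¬ g ≤ 0 := not_le.mpr (lt_of_lt_of_le hbb h)
    show (if g ≤ 0 then ξ else if bbv ≤ g then Bγ else ΘC g) = Bγ
    rw [if_neg h0, if_pos h]
  have hAin : ∀ g : ℝ, 0 < g → g < bbv → A g = ΘC g := by
    intro g h1 h2
    show (if g ≤ 0 then ξ else if bbv ≤ g then Bγ else ΘC g) = ΘC g
    rw [if_neg (not_le.mpr h1), if_neg (not_le.mpr h2)]
  have A_cases : ∀ g : ℝ, A g = ξ ∨ A g = Bγ ∨ (0 < g ∧ g < bbv ∧ A g = ΘC g) := by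
    intro g
    by_cases h1 : g ≤ 0
    · exact Or.inl (hAle0 g h1)
    · by_cases h2 : bbv ≤ g
      · exact Or.inr (Or.inl (hAge g h2))
      · push_neg at h1 h2
        exact Or.inr (Or.inr ⟨h1, h2, hAin g h1 h2⟩)
  have A_s1 : ∀ (g : ℝ) (y : X), ξ y ≤ A g y := by
    intro g y
    rcases A_cases g with h | h | ⟨h1, h2, h⟩ <;> rw [h]
    · exact hxB y
    · exact c1 g h1 h2 y
  have A_s2 : ∀ (g : ℝ) (y : X), A g y ≤ Bγ y := by
    intro g y
    rcases A_cases g with h | h | ⟨h1, h2, h⟩ <;> rw [h]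
    · exact hxB y
    · exact c8 g h1 h2 y
  have A_lip : ∀ (g : ℝ) (a c : X), |A g a - A g c| ≤ dist a c := by
    intro g a c
    rcases A_cases g with h | h | ⟨h1, h2, h⟩ <;> rw [h]
    · exact hxlip a c
    · exact hBlip a c
    · exact c4 _ a c
  have A_mono : ∀ g g' : ℝ, g ≤ g' → ∀ y, A g y ≤ A g' y := by
    intro g g' hgg y
    by_cases h1 : g ≤ 0
    · rw [hAle0 g h1]
      exact A_s1 g' y
    · push_neg at h1
      by_cases h2 : bbv ≤ g
      · rw [hAge g h2, hAge g' (h2.trans hgg)]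
      · push_neg at h2
        rw [hAin g h1 h2]
        by_cases h3 : bbv ≤ g'
        · rw [hAge g' h3]
          exact c8 g h1 h2 y
        · push_neg at h3
          rw [hAin g' (lt_of_lt_of_le h1 hgg) h3]
          exact c2 g g' h1 h2 (lt_of_lt_of_le h1 hgg) h3 hgg y
  have A_gauge : ∀ g : ℝ, St14.gauge b ξ Bγ pseq (A g) = max 0 (min g bbv) := by
    intro g
    by_cases h1 : g ≤ 0
    · rw [hAle0 g h1, St14.gauge_of_xi b ξ Bγ pseq hxB,
        max_eq_left ((min_le_left g bbv).trans h1)]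
    · push_neg at h1
      by_cases h2 : bbv ≤ g
      · rw [hAge g h2, ← hbbv, min_eq_right h2, max_eq_right hbb.le]
      · push_neg at h2
        rw [hAin g h1 h2, c7 g h1 h2, min_eq_left h2.le, max_eq_right h1.le]
  have clamp_lip : ∀ u v : ℝ, u ≤ v → max 0 (min v bbv) - max 0 (min u bbv) ≤ v - u := by
    intro u v huv
    have k1 : min v bbv ≤ min u bbv + (v - u) := by
      rcases le_total u bbv with h | h
      · have := min_le_left v bbv
        rw [min_eq_left h]
        linarith
      · have := min_le_right v bbv
        rw [min_eq_right h]
        linarith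
    have k2 : max 0 (min v bbv) ≤ max 0 (min u bbv) + (v - u) := by
      rcases le_total (min v bbv) 0 with h | h
      · rw [max_eq_left h]
        have := le_max_left (0:ℝ) (min u bbv)
        linarith
      · rw [max_eq_right h]
        have := le_max_right (0:ℝ) (min u bbv)
        linarith
    linarith
  have ptcont : ∀ (pt : X) (ε : ℝ), 0 < ε → ∃ δ > 0, ∀ g g' : ℝ, |g - g'| < δ →
      |A g pt - A g' pt| < ε := by
    intro pt ε hε
    obtain ⟨δ, hδ0, hδ⟩ := St14.gauge_gap b ξ Bγ pseq hxB hB2 hx2 hdense pt hε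
    refine ⟨δ, hδ0, ?_⟩
    have key : ∀ g g' : ℝ, g ≤ g' → |g - g'| < δ → |A g pt - A g' pt| < ε := by
      intro g g' hgg habs
      have hm : ∀ y, A g y ≤ A g' y := A_mono g g' hgg
      have h2 : |A g pt - A g' pt| = A g' pt - A g pt := by
        rw [abs_sub_comm]
        exact abs_of_nonneg (by linarith [hm pt])
      rw [h2]
      apply hδ (A g) (A g') (A_s1 g) (A_s2 g) (A_s1 g') (A_s2 g') hm (A_lip g) (A_lip g')
      rw [A_gauge, A_gauge]
      have h3 := clamp_lip g g' hgg
      have h4 : g' - g ≤ |g - g'| := by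
        rw [abs_sub_comm]
        exact le_abs_self _
      linarith
    intro g g' habs
    rcases le_total g g' with h | h
    · exact key g g' h habs
    · rw [abs_sub_comm] at habs ⊢
      exact key g' g h habs
  -- the path
  set Fm : unitInterval × X → ℝ := fun z => A (bbv * (1 - (z.1 : ℝ))) z.2 with hFm
  have Fcont : Continuous Fm := by
    rw [Metric.continuous_iff]
    intro z ε hε
    obtain ⟨δ1, hδ10, hδ1⟩ := ptcont z.2 (ε/3) (by linarith)
    refine ⟨min (δ1 / (bbv + 1)) (ε/3), lt_min (by positivity) (by linarith), ?_⟩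
    intro z' hz'
    rw [Prod.dist_eq] at hz'
    have hd1 : dist z'.1 z.1 < min (δ1 / (bbv + 1)) (ε/3) :=
      lt_of_le_of_lt (le_max_left _ _) hz'
    have hd2 : dist z'.2 z.2 < min (δ1 / (bbv + 1)) (ε/3) :=
      lt_of_le_of_lt (le_max_right _ _) hz'
    have hgg : |bbv * (1 - (z'.1:ℝ)) - bbv * (1 - (z.1:ℝ))| < δ1 := by
      have he : bbv * (1 - (z'.1:ℝ)) - bbv * (1 - (z.1:ℝ)) = bbv * ((z.1:ℝ) - (z'.1:ℝ)) := by
        ring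
      rw [he, abs_mul, abs_of_nonneg hbb.le]
      have h3 : dist z'.1 z.1 = |(z'.1:ℝ) - (z.1:ℝ)| := by
        rw [Subtype.dist_eq, Real.dist_eq]
      have h2 : |(z.1:ℝ) - (z'.1:ℝ)| < δ1 / (bbv + 1) := by
        rw [abs_sub_comm, ← h3]
        exact lt_of_lt_of_le hd1 (min_le_left _ _)
      calc bbv * |(z.1:ℝ) - (z'.1:ℝ)| ≤ (bbv + 1) * |(z.1:ℝ) - (z'.1:ℝ)| := by
            nlinarith [abs_nonneg ((z.1:ℝ) - (z'.1:ℝ))]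
        _ < (bbv + 1) * (δ1 / (bbv + 1)) := by
            apply mul_lt_mul_of_pos_left h2
            linarith
        _ = δ1 := by field_simp
    have hstep1 : |Fm z' - A (bbv * (1 - (z'.1:ℝ))) z.2| ≤ dist z'.2 z.2 :=
      A_lip _ z'.2 z.2
    have hstep2 : |A (bbv * (1 - (z'.1:ℝ))) z.2 - A (bbv * (1 - (z.1:ℝ))) z.2| < ε/3 :=
      hδ1 _ _ hgg
    rw [Real.dist_eq]
    have hd2' : dist z'.2 z.2 < ε/3 := lt_of_lt_of_le hd2 (min_le_right _ _)
    have htri : |Fm z' - Fm z| ≤ |Fm z' - A (bbv * (1 - (z'.1:ℝ))) z.2|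
        + |A (bbv * (1 - (z'.1:ℝ))) z.2 - Fm z| :=
      abs_sub_le _ _ _
    have hFmz : Fm z = A (bbv * (1 - (z.1:ℝ))) z.2 := rfl
    rw [hFmz] at htri
    linarith
  refine ⟨ContinuousMap.curry ⟨Fm, Fcont⟩, ?_, ?_, ?_⟩
  · ext pt
    show A (bbv * (1 - ((0 : unitInterval) : ℝ))) pt = Bγ pt
    have h2 : bbv * (1 - ((0 : unitInterval) : ℝ)) = bbv := by
      norm_num
    rw [h2, hAge bbv (le_refl _)]
  · ext pt
    show A (bbv * (1 - ((1 : unitInterval) : ℝ))) pt = ξ pt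
    have h2 : bbv * (1 - ((1 : unitInterval) : ℝ)) = 0 := by
      norm_num
    rw [h2, hAle0 0 (le_refl 0)]
  · intro s
    have hform : (ContinuousMap.curry ⟨Fm, Fcont⟩) s = A (bbv * (1 - (s:ℝ))) := by
      ext pt
      rfl
    rw [hform]
    rcases A_cases (bbv * (1 - (s:ℝ))) with hc | hc | ⟨h1, h2, hc⟩
    · rw [hc]
      exact ⟨hξ, hopt⟩
    · rw [hc]
      exact ⟨⟨hBcl, St14.opt_notMem (b := b) (Γ := R) hBRs⟩, hBRs⟩
    · rw [hc]
      have hopt3 : ∀ t : ℝ≥0, (ΘC (bbv * (1 - (s:ℝ)))) (R t) = -(t:ℝ) := c3 _ h1 h2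
      exact ⟨⟨c6 _, St14.opt_notMem (b := b) (Γ := R) hopt3⟩, hopt3⟩
end

section
/- Let (X, d) be a proper, uniquely geodesic, straight metric space which is C¹ along geodesics and has constant distance variation. Let γ be a geodesic ray based at b, and let α be a bi-infinite geodesic with α(0) lying in the image of γ. Then for every ξ ∈ Π_b^{-1}(γ) (i.e. ξ in the horoboundary with ξ(γ t) = −t for all t ≥ 0), the function t ↦ ξ(α(t)) is differentiable at t = 0, and the value of this derivative is the same for all ξ ∈ Π_b^{-1}(γ). -/
open Filter Topology
open scoped NNReal ENNReal

variable {X : Type*} [MetricSpace X]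

private lemma isometry_isGeodesicOn {ℓ : ℝ → X} (h : Isometry ℓ)
    (s : Set ℝ) : IsGeodesicOn ℓ s := fun u _ v _ => by
  rw [h.dist_eq, Real.dist_eq]

private lemma hasDerivAt_of_squeeze {f g h : ℝ → ℝ} {D : ℝ}
    (hf : HasDerivAt f D 0) (hg : HasDerivAt g D 0)
    (hf0 : f 0 = h 0) (hg0 : g 0 = h 0)
    (hgh : ∀ t, g t ≤ h t) (hhf : ∀ t, h t ≤ f t) : HasDerivAt h D 0 := by
  rw [hasDerivAt_iff_isLittleO] at hf hg ⊢
  rw [Asymptotics.isLittleO_iff] at hf hg ⊢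
  intro c hc
  filter_upwards [hf (half_pos hc), hg (half_pos hc)] with x h1 h2
  simp only [smul_eq_mul, sub_zero, Real.norm_eq_abs] at h1 h2 ⊢
  have e1 : h x - h 0 - x * D ≤ f x - f 0 - x * D := by
    have := hhf x; rw [hf0]; linarith
  have e2 : g x - g 0 - x * D ≤ h x - h 0 - x * D := by
    have := hgh x; rw [hg0]; linarith
  have a1 := abs_le.mp h1
  have a2 := abs_le.mp h2
  have hx : (0:ℝ) ≤ |x| := abs_nonneg x
  have hcx : c / 2 * |x| ≤ c * |x| := by nlinarith
  rw [abs_le]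
  constructor <;> linarith [a1.1, a1.2, a2.1, a2.2]

/-- If `X` is moreover C¹ along geodesics with constant distance variation,
`γ` is a geodesic ray based at `b` and `α` is a bi-infinite geodesic with `α 0` on `γ`,
then `t ↦ ξ (α t)` is differentiable at `0`, with the same derivative for every horofunction
`ξ` in the fiber `Π_b⁻¹ (γ)`. -/
theorem statement16 [ProperSpace X] (hU : UniquelyGeodesic X) (hS : Straight X)
    (hC1 : C1AlongGeodesics X) (hCDV : ConstantDistanceVariation X)
    (b : X) (γ : GeodesicRay X b)
    (α : ℝ → X) (hα : Isometry α) (hα0 : α 0 ∈ Set.range ⇑γ.1) :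
    ∃ D : ℝ, ∀ ξ : C(X, ℝ), ξ ∈ horoboundary b → (∀ t : ℝ≥0, ξ (γ.1 t) = -(t : ℝ)) →
      HasDerivAt (fun t : ℝ => ξ (α t)) D 0 := by
  classical
  obtain ⟨c0, hc0⟩ := hα0
  set s₀ : ℝ := (c0 : ℝ) with hs₀def
  have hs₀ : 0 ≤ s₀ := c0.coe_nonneg
  have hgiso := γ.2.1
  have hgIcc : ∀ s : Set ℝ, s ⊆ Set.Ici 0 →
      IsGeodesicOn (fun r => γ.1 (Real.toNNReal r)) s := by
    intro s hsub u hu v hv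
    have hu0 : (0:ℝ) ≤ u := hsub hu
    have hv0 : (0:ℝ) ≤ v := hsub hv
    rw [hgiso.dist_eq, NNReal.dist_eq, Real.coe_toNNReal _ hu0, Real.coe_toNNReal _ hv0]
  obtain ⟨γb, ⟨hγbiso, hγbeq⟩, hγbuniq⟩ := hS (fun r => γ.1 (Real.toNNReal r)) 0 1 one_pos
    (hgIcc _ (fun x hx => hx.1))
  have hγb : ∀ t : ℝ, 0 ≤ t → γb t = γ.1 (Real.toNNReal t) := by
    intro t ht
    rcases le_or_gt t 1 with h1 | h1
    · exact hγbeq ⟨ht, h1⟩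
    · obtain ⟨ℓ, ⟨hℓiso, hℓeq⟩, -⟩ := hS (fun r => γ.1 (Real.toNNReal r)) 0 t (by linarith)
        (hgIcc _ (fun x hx => hx.1))
      have he : ℓ = γb := hγbuniq ℓ ⟨hℓiso, fun x hx => hℓeq ⟨hx.1, hx.2.trans h1.le⟩⟩
      rw [← he]
      exact hℓeq ⟨ht, le_refl t⟩
  have hγb0 : γb 0 = b := by
    rw [hγb 0 le_rfl, Real.toNNReal_zero]; exact γ.2.2
  have hγbs₀ : γb s₀ = α 0 := by
    rw [hγb s₀ hs₀, Real.toNNReal_coe]; exact hc0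
  have hα0' : α 0 = γb s₀ := hγbs₀.symm
  have hdγb : ∀ s t : ℝ, dist (γb s) (γb t) = |s - t| := fun s t => by
    rw [hγbiso.dist_eq, Real.dist_eq]
  -- per-ξ facts : Lipschitz + full-line values
  have key : ∀ ξ : C(X, ℝ), ξ ∈ horoboundary b → (∀ t : ℝ≥0, ξ (γ.1 t) = -(t : ℝ)) →
      (∀ y z : X, ξ y - ξ z ≤ dist y z) ∧ (∀ r : ℝ, ξ (γb r) = -r) := by
    intro ξ hξ hξγ
    have hξcl : ξ ∈ closure (Set.range (horo b)) := hξ.1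
    have hlip : ∀ y z : X, ξ y - ξ z ≤ dist y z := by
      intro y z
      have hclosed : IsClosed {f : C(X, ℝ) | f y - f z ≤ dist y z} :=
        isClosed_le ((continuous_eval_const y).sub (continuous_eval_const z)) continuous_const
      have hsub : Set.range (horo b) ⊆ {f : C(X, ℝ) | f y - f z ≤ dist y z} := by
        rintro - ⟨x, rfl⟩
        have h := dist_triangle x z y
        rw [dist_comm z y] at h
        simp only [horo, ContinuousMap.coe_mk, Set.mem_setOf_eq]
        linarith
      exact closure_minimal hsub hclosed hξcl
    have hξb : ξ b = 0 := by
      have hclosed : IsClosed {f : C(X, ℝ) | f b = 0} :=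
        isClosed_eq (continuous_eval_const b) continuous_const
      have hsub : Set.range (horo b) ⊆ {f : C(X, ℝ) | f b = 0} := by
        rintro - ⟨x, rfl⟩
        simp [horo]
      exact closure_minimal hsub hclosed hξcl
    have hray : ∀ t : ℝ, 0 ≤ t → ξ (γb t) = -t := by
      intro t ht
      rw [hγb t ht, hξγ (Real.toNNReal t), Real.coe_toNNReal _ ht]
    refine ⟨hlip, ?_⟩
    -- the filter of approximants
    set F : Filter X := Filter.comap (horo b) (𝓝 ξ) with hF
    have hFne : F.NeBot := by
      rw [hF, Filter.comap_neBot_iff]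
      intro t ht
      obtain ⟨f, hft, x, rfl⟩ := mem_closure_iff_nhds.mp hξcl t ht
      exact ⟨x, hft⟩
    have htend : Filter.Tendsto (horo b) F (𝓝 ξ) := Filter.tendsto_comap
    have hcont : Continuous (horo b) := by
      have he : horo b = ⇑(ContinuousMap.curry
          ⟨fun p : X × X => dist p.1 p.2 - dist p.1 b,
            (continuous_fst.dist continuous_snd).sub (continuous_fst.dist continuous_const)⟩) := by
        funext x; ext y; rfl
      rw [he]; exact ContinuousMap.continuous _
    have hdist : Filter.Tendsto (fun x => dist b x) F Filter.atTop := by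
      by_contra hcon
      rw [Filter.tendsto_atTop] at hcon
      push_neg at hcon
      obtain ⟨R, hR⟩ := hcon
      simp only [← not_le] at hR
      have hne2 : (F ⊓ Filter.principal (Metric.closedBall b R)).NeBot := by
        rw [Filter.inf_principal_neBot_iff]
        intro U hU
        obtain ⟨x, hxU, hx⟩ := Filter.frequently_iff.mp hR hU
        exact ⟨x, hxU, by
          rw [Metric.mem_closedBall, dist_comm]
          exact (not_le.mp hx).le⟩
      obtain ⟨x₀, -, hx₀⟩ := (isCompact_closedBall b R).exists_clusterPt
        (inf_le_right : F ⊓ Filter.principal (Metric.closedBall b R) ≤ _)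
      haveI hne3 : (𝓝 x₀ ⊓ (F ⊓ Filter.principal (Metric.closedBall b R))).NeBot := hx₀
      have h1 : Filter.Tendsto (horo b)
          (𝓝 x₀ ⊓ (F ⊓ Filter.principal (Metric.closedBall b R))) (𝓝 ξ) :=
        htend.mono_left (le_trans inf_le_right inf_le_left)
      have h2 : Filter.Tendsto (horo b)
          (𝓝 x₀ ⊓ (F ⊓ Filter.principal (Metric.closedBall b R))) (𝓝 (horo b x₀)) :=
        (hcont.continuousAt).mono_left inf_le_left
      exact hξ.2 ⟨x₀, (tendsto_nhds_unique h1 h2).symm⟩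
    -- negative side of the line
    have hneg : ∀ u : ℝ, 0 < u → ξ (γb (-u)) = u := by
      intro u hu
      have hex : ∀ x : X, b ≠ x → ∃ ℓ : ℝ → X, Isometry ℓ ∧ ℓ 0 = b ∧ ℓ (dist b x) = x := by
        intro x hbx
        obtain ⟨σ, ⟨hσg, hσ0, hσd⟩, -⟩ := hU b x hbx
        obtain ⟨ℓ, ⟨hℓiso, hℓeq⟩, -⟩ := hS σ 0 (dist b x) (dist_pos.mpr hbx) hσg
        exact ⟨ℓ, hℓiso, (hℓeq ⟨le_refl _, dist_nonneg⟩).trans hσ0,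
          (hℓeq ⟨dist_nonneg, le_refl _⟩).trans hσd⟩
      set m : X → X := fun x => if h : b ≠ x then (hex x h).choose (-u) else b with hm
      have hmball : ∀ x, m x ∈ Metric.closedBall b u := by
        intro x
        by_cases h : b ≠ x
        · obtain ⟨hiso, h0, hd⟩ := (hex x h).choose_spec
          simp only [hm, dif_pos h]
          have e : dist ((hex x h).choose 0) ((hex x h).choose (-u)) = u := by
            rw [hiso.dist_eq, Real.dist_eq, zero_sub, neg_neg, abs_of_nonneg hu.le]
          rw [h0] at e
          rw [Metric.mem_closedBall, dist_comm]
          exact e.le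
        · simp only [hm, dif_neg h]
          exact Metric.mem_closedBall_self hu.le
      have hmdist : ∀ x, b ≠ x → dist x (m x) = dist b x + u := by
        intro x h
        obtain ⟨hiso, h0, hd⟩ := (hex x h).choose_spec
        simp only [hm, dif_pos h]
        have e : dist ((hex x h).choose (dist b x)) ((hex x h).choose (-u))
            = dist b x + u := by
          rw [hiso.dist_eq, Real.dist_eq,
            show dist b x - (-u) = dist b x + u by ring,
            abs_of_nonneg (add_nonneg dist_nonneg hu.le)]
        rw [hd] at e
        exact e
      have hKmem : Metric.closedBall b u ∈ Filter.map m F :=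
        Filter.mem_map.mpr (Filter.univ_mem' hmball)
      haveI : (Filter.map m F).NeBot := hFne.map m
      obtain ⟨y, hyK, hy⟩ := (isCompact_closedBall b u).exists_clusterPt
        (Filter.le_principal_iff.mpr hKmem)
      have hξy : u ≤ ξ y := by
        by_contra hcon
        push_neg at hcon
        set ε : ℝ := (u - ξ y) / 3 with hε
        have hε0 : 0 < ε := by rw [hε]; linarith
        have hteval : Filter.Tendsto (fun x => horo b x y) F (𝓝 (ξ y)) :=
          ((continuous_eval_const y).tendsto ξ).comp htend
        have h1 : ∀ᶠ x in F, dist (horo b x y) (ξ y) < ε :=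
          hteval (Metric.ball_mem_nhds _ hε0)
        have h2 : ∀ᶠ x in F, b ≠ x := by
          filter_upwards [hdist.eventually_ge_atTop 1] with x hx
          intro hbad
          rw [← hbad] at hx
          simp at hx
          linarith
        have hS' : {x | dist (horo b x y) (ξ y) < ε ∧ b ≠ x} ∈ F := h1.and h2
        have hne : (Metric.ball y ε ∩
            m '' {x | dist (horo b x y) (ξ y) < ε ∧ b ≠ x}).Nonempty :=
          clusterPt_iff_nonempty.mp hy (Metric.ball_mem_nhds y hε0) (Filter.image_mem_map hS')
        obtain ⟨z, hz1, x, ⟨hx1, hx2⟩, rfl⟩ := hne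
        rw [Metric.mem_ball] at hz1
        have hhoro : (horo b x) y = dist x y - dist x b := rfl
        rw [Real.dist_eq, hhoro] at hx1
        have habs := abs_lt.mp hx1
        have hd1 : dist x y ≥ dist x (m x) - dist (m x) y := by
          have h3 := dist_triangle x y (m x)
          rw [dist_comm y (m x)] at h3
          linarith
        have hd2 := hmdist x hx2
        rw [dist_comm x b] at habs
        linarith [habs.2, hd1, hd2, hz1]
      have hξyub : ξ y ≤ u := by
        have h := hlip y b
        rw [hξb] at h
        have hyb : dist y b ≤ u := Metric.mem_closedBall.mp hyK
        linarith
      have hξyeq : ξ y = u := le_antisymm hξyub hξy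
      have hyb : dist y b = u := by
        have h1 : dist y b ≤ u := Metric.mem_closedBall.mp hyK
        have h2 := hlip y b
        rw [hξb, hξyeq] at h2
        linarith
      have hyg : ∀ t : ℝ, 0 ≤ t → dist y (γb t) = u + t := by
        intro t ht
        have h2 : dist b (γb t) = t := by
          rw [← hγb0, hdγb, zero_sub, abs_neg, abs_of_nonneg ht]
        have hub2 : dist y (γb t) ≤ u + t := by
          have := dist_triangle y b (γb t)
          linarith
        have hlb2 : u + t ≤ dist y (γb t) := by
          have h3 := hlip y (γb t)
          rw [hξyeq, hray t ht] at h3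
          linarith
        linarith
      have hyne : y ≠ b := by
        intro h
        rw [h, dist_self] at hyb
        linarith
      obtain ⟨β, ⟨hβg, hβ0, hβu⟩, -⟩ := hU y b hyne
      rw [hyb] at hβg hβu
      set ρ : ℝ → X := fun w => if w ≤ u then β w else γb (w - u) with hρ
      have hρgeo : IsGeodesicOn ρ (Set.Icc 0 (u + 1)) := by
        have main : ∀ w₁ ∈ Set.Icc (0:ℝ) (u+1), ∀ w₂ ∈ Set.Icc (0:ℝ) (u+1), w₁ ≤ w₂ →
            dist (ρ w₁) (ρ w₂) = |w₁ - w₂| := by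
          intro w₁ hw₁ w₂ hw₂ hle
          rw [abs_of_nonpos (by linarith), neg_sub]
          by_cases h2 : w₂ ≤ u
          · have h1 : w₁ ≤ u := le_trans hle h2
            simp only [hρ, if_pos h1, if_pos h2]
            rw [hβg w₁ ⟨hw₁.1, h1⟩ w₂ ⟨hw₂.1, h2⟩, abs_of_nonpos (by linarith), neg_sub]
          · by_cases h1 : w₁ ≤ u
            · simp only [hρ, if_pos h1, if_neg h2]
              push_neg at h2
              have hb1 : dist (β w₁) b = u - w₁ := by
                rw [← hβu, hβg w₁ ⟨hw₁.1, h1⟩ u ⟨hu.le, le_refl u⟩,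
                  abs_of_nonpos (by linarith), neg_sub]
              have hyβ : dist y (β w₁) = w₁ := by
                rw [← hβ0, hβg 0 ⟨le_refl (0:ℝ), hu.le⟩ w₁ ⟨hw₁.1, h1⟩,
                  zero_sub, abs_neg, abs_of_nonneg hw₁.1]
              have hbg : dist b (γb (w₂ - u)) = w₂ - u := by
                rw [← hγb0, hdγb, zero_sub, abs_neg, abs_of_nonneg (by linarith)]
              have hygb : dist y (γb (w₂ - u)) = u + (w₂ - u) := hyg _ (by linarith)
              have hub2 : dist (β w₁) (γb (w₂ - u)) ≤ w₂ - w₁ := by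
                have := dist_triangle (β w₁) b (γb (w₂ - u))
                linarith
              have hlb2 : w₂ - w₁ ≤ dist (β w₁) (γb (w₂ - u)) := by
                have := dist_triangle y (β w₁) (γb (w₂ - u))
                linarith
              linarith
            · simp only [hρ, if_neg h1, if_neg h2]
              rw [hdγb, show w₁ - u - (w₂ - u) = w₁ - w₂ by ring,
                abs_of_nonpos (by linarith), neg_sub]
        intro w₁ hw₁ w₂ hw₂
        rcases le_total w₁ w₂ with h | h
        · exact main w₁ hw₁ w₂ hw₂ h
        · rw [dist_comm, abs_sub_comm]
          exact main w₂ hw₂ w₁ hw₁ h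
      obtain ⟨ℓ, ⟨hℓiso, hℓeq⟩, -⟩ := hS ρ 0 (u+1) (by linarith) hρgeo
      have hρgeo2 : IsGeodesicOn ρ (Set.Icc u (u+1)) := fun a ha c hc =>
        hρgeo a ⟨le_trans hu.le ha.1, ha.2⟩ c ⟨le_trans hu.le hc.1, hc.2⟩
      obtain ⟨ℓ₂, -, hℓ₂uniq⟩ := hS ρ u (u+1) (by linarith) hρgeo2
      have hc1 : ℓ = ℓ₂ :=
        hℓ₂uniq ℓ ⟨hℓiso, fun w hw => hℓeq ⟨le_trans hu.le hw.1, hw.2⟩⟩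
      have hc2 : (fun r => γb (r - u)) = ℓ₂ := by
        refine hℓ₂uniq _ ⟨?_, ?_⟩
        · exact Isometry.of_dist_eq fun a c => by
            rw [hdγb, Real.dist_eq, show a - u - (c - u) = a - c by ring]
        · intro w hw
          by_cases hwu : w ≤ u
          · have hwe : w = u := le_antisymm hwu hw.1
            simp only [hρ, if_pos hwu]
            rw [hwe, sub_self, hγb0, hβu]
          · simp only [hρ, if_neg hwu]
      have hℓρ0 : ℓ 0 = y := by
        have h := hℓeq ⟨le_refl (0:ℝ), by linarith⟩
        rw [h]
        simp only [hρ, if_pos hu.le]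
        exact hβ0
      have hℓeq2 : ℓ = fun r => γb (r - u) := hc1.trans hc2.symm
      have hfin : γb (0 - u) = y := by
        rw [← hℓρ0, hℓeq2]
      rw [zero_sub] at hfin
      rw [hfin, hξyeq]
    intro r
    rcases le_or_gt 0 r with h | h
    · exact hray r h
    · have h2 := hneg (-r) (by linarith)
      rw [neg_neg] at h2
      rw [h2]
  -- Case analysis: is α a reparametrization of γb through α 0?
  by_cases hA : α = fun t => γb (s₀ + t)
  · refine ⟨-1, ?_⟩
    intro ξ hξ hξγ
    obtain ⟨hlip, hfull⟩ := key ξ hξ hξγ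
    have he : (fun t : ℝ => ξ (α t)) = fun t => -s₀ + (-1) * t := by
      funext t
      rw [hA]
      simp only []
      rw [hfull (s₀ + t)]
      ring
    rw [he]
    have h := (((hasDerivAt_id (0:ℝ)).const_mul (-1 : ℝ)).const_add (-s₀))
    simpa using h
  by_cases hA' : α = fun t => γb (s₀ - t)
  · refine ⟨1, ?_⟩
    intro ξ hξ hξγ
    obtain ⟨hlip, hfull⟩ := key ξ hξ hξγ
    have he : (fun t : ℝ => ξ (α t)) = fun t => -s₀ + 1 * t := by
      funext t
      rw [hA']
      simp only []
      rw [hfull (s₀ - t)]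
      ring
    rw [he]
    have h := (((hasDerivAt_id (0:ℝ)).const_mul (1 : ℝ)).const_add (-s₀))
    simpa using h
  -- generic case
  · have hnotin : ∀ s : ℝ, s ≠ s₀ → γb s ∉ Set.range α := by
      rintro s hs ⟨r, hr⟩
      have hr0 : r ≠ 0 := by
        rintro rfl
        exact hs (hγbiso.injective (hα0'.symm.trans hr)).symm
      set ε₁ : ℝ := if 0 < r then 1 else -1 with hε₁
      set ε₂ : ℝ := if s₀ < s then 1 else -1 with hε₂
      set L : ℝ := |r| with hLdef
      have hL0 : 0 < L := abs_pos.mpr hr0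
      have e1 : dist (α 0) (α r) = L := by
        rw [hα.dist_eq, Real.dist_eq, zero_sub, abs_neg]
      have e2 : dist (α 0) (α r) = |s₀ - s| := by
        rw [hα0', hr, hdγb]
      have hLs : |s - s₀| = L := by
        rw [abs_sub_comm, ← e2, e1]
      have hε₁sq : ε₁ * ε₁ = 1 := by rw [hε₁]; split_ifs <;> norm_num
      have habs₁ : |ε₁| = 1 := by rw [hε₁]; split_ifs <;> norm_num
      have habs₂ : |ε₂| = 1 := by rw [hε₂]; split_ifs <;> norm_num
      have hε₁L : ε₁ * L = r := by
        rw [hε₁, hLdef]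
        split_ifs with h
        · rw [one_mul, abs_of_pos h]
        · push_neg at h
          rw [abs_of_nonpos h]; ring
      have hε₂L : ε₂ * L = s - s₀ := by
        rw [hε₂, ← hLs]
        split_ifs with h
        · rw [one_mul, abs_of_pos (by linarith)]
        · push_neg at h
          have hlt : s < s₀ := lt_of_le_of_ne h hs
          rw [abs_of_nonpos (by linarith)]; ring
      have hiso1 : Isometry (fun w => α (ε₁ * w)) := Isometry.of_dist_eq fun a c => by
        rw [hα.dist_eq, Real.dist_eq, Real.dist_eq, ← mul_sub, abs_mul, habs₁, one_mul]
      have hiso2 : Isometry (fun w => γb (s₀ + ε₂ * w)) := Isometry.of_dist_eq fun a c => by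
        rw [hdγb, show s₀ + ε₂ * a - (s₀ + ε₂ * c) = ε₂ * (a - c) by ring, abs_mul, habs₂,
          one_mul, Real.dist_eq]
      have hne0r : α 0 ≠ α r := fun h => hr0 (hα.injective h).symm
      obtain ⟨σ, hσ, hσuniq⟩ := hU (α 0) (α r) hne0r
      rw [e1] at hσ hσuniq
      have h1 : Set.EqOn (fun w => α (ε₁ * w)) σ (Set.Icc 0 L) :=
        hσuniq _ ⟨isometry_isGeodesicOn hiso1 _, by simp, by
          show α (ε₁ * L) = α r
          rw [hε₁L]⟩
      have h2 : Set.EqOn (fun w => γb (s₀ + ε₂ * w)) σ (Set.Icc 0 L) :=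
        hσuniq _ ⟨isometry_isGeodesicOn hiso2 _, by
          show γb (s₀ + ε₂ * 0) = α 0
          rw [mul_zero, add_zero, hα0'], by
          show γb (s₀ + ε₂ * L) = α r
          rw [hε₂L, show s₀ + (s - s₀) = s by ring, hr]⟩
      obtain ⟨ℓ, -, hℓuniq⟩ := hS (fun w => α (ε₁ * w)) 0 L hL0 (isometry_isGeodesicOn hiso1 _)
      have e3 : (fun w => α (ε₁ * w)) = ℓ := hℓuniq _ ⟨hiso1, Set.eqOn_refl _ _⟩
      have e4 : (fun w => γb (s₀ + ε₂ * w)) = ℓ :=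
        hℓuniq _ ⟨hiso2, fun w hw => (h2 hw).trans (h1 hw).symm⟩
      have e5 : ∀ w, α (ε₁ * w) = γb (s₀ + ε₂ * w) := fun w => by
        rw [show α (ε₁ * w) = ℓ w from congrFun e3 w, ← congrFun e4 w]
      have e6 : ∀ t, α t = γb (s₀ + (ε₂ * ε₁) * t) := by
        intro t
        have h := e5 (ε₁ * t)
        rw [← mul_assoc, hε₁sq, one_mul] at h
        rw [h]
        congr 1
        ring
      have hcases : ε₂ * ε₁ = 1 ∨ ε₂ * ε₁ = -1 := by
        rw [hε₂, hε₁]; split_ifs <;> norm_num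
      rcases hcases with h | h
      · apply hA
        funext t
        rw [e6 t, h, one_mul]
      · apply hA'
        funext t
        rw [e6 t, h]
        congr 1
        ring
    have hdiffp : ∀ s : ℝ, s ≠ s₀ → DifferentiableAt ℝ (fun t => dist (α t) (γb s)) 0 :=
      fun s hs => (hC1 α hα).1 (γb s) (hnotin s hs) 0
    have hη : Isometry (fun t : ℝ => γb (s₀ + t)) := Isometry.of_dist_eq fun a c => by
      rw [hdγb, Real.dist_eq, show s₀ + a - (s₀ + c) = a - c by ring]
    have hη' : Isometry (fun t : ℝ => γb (s₀ - t)) := Isometry.of_dist_eq fun a c => by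
      rw [hdγb, Real.dist_eq, show s₀ - a - (s₀ - c) = -(a - c) by ring, abs_neg]
    have hcdv1 := hCDV α (fun t => γb (s₀ + t)) hα hη
      (by show α 0 = γb (s₀ + 0); rw [add_zero, hα0']) hA
    have hcdv2 := hCDV α (fun t => γb (s₀ - t)) hα hη'
      (by show α 0 = γb (s₀ - 0); rw [sub_zero, hα0']) hA'
    have hd1 : DifferentiableAt ℝ (fun t => dist (α t) (γb (s₀ + 1))) 0 :=
      hdiffp (s₀ + 1) (by intro h; linarith)
    have hd3 : DifferentiableAt ℝ (fun t => dist (α t) (γb (s₀ - 1))) 0 :=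
      hdiffp (s₀ - 1) (by intro h; linarith)
    have hdm1 : DifferentiableAt ℝ (fun t => dist (α t) (γb (-1))) 0 :=
      hdiffp (-1) (by intro h; linarith)
    rcases hcdv2 with ⟨-, he2'⟩ | hbad
    swap
    · exact absurd hd3 (by simpa using hbad 1 one_pos)
    have he2 := he2' (s₀ + 1) 1 (by linarith) one_pos
    simp only [show s₀ - (s₀ + 1) = (-1:ℝ) by ring] at he2
    -- he2 : deriv (dist ∘ γb(-1)) 0 = deriv (dist ∘ γb (s₀-1)) 0
    refine ⟨deriv (fun t => dist (α t) (γb (s₀ + 1))) 0, ?_⟩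
    set D : ℝ := deriv (fun t => dist (α t) (γb (s₀ + 1))) 0 with hD
    set D3 : ℝ := deriv (fun t => dist (α t) (γb (s₀ - 1))) 0 with hD3
    have hDer1 : HasDerivAt (fun t => dist (α t) (γb (s₀ + 1))) D 0 := hd1.hasDerivAt
    have hDer3 : HasDerivAt (fun t => dist (α t) (γb (s₀ - 1))) D3 0 := hd3.hasDerivAt
    have hmin : IsLocalMin (fun t => dist (α t) (γb (s₀+1)) + dist (α t) (γb (s₀-1))) 0 := by
      apply Filter.Eventually.of_forall
      intro t
      have hpq : dist (γb (s₀+1)) (γb (s₀-1)) = 2 := by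
        rw [hdγb, show s₀ + 1 - (s₀ - 1) = (2:ℝ) by ring,
          abs_of_nonneg (by norm_num : (0:ℝ) ≤ 2)]
      have htri := dist_triangle (γb (s₀+1)) (α t) (γb (s₀-1))
      rw [dist_comm (γb (s₀+1)) (α t)] at htri
      have h3 : dist (α 0) (γb (s₀+1)) = 1 := by
        rw [hα0', hdγb, show s₀ - (s₀+1) = (-1:ℝ) by ring, abs_neg, abs_one]
      have h4 : dist (α 0) (γb (s₀-1)) = 1 := by
        rw [hα0', hdγb, show s₀ - (s₀-1) = (1:ℝ) by ring, abs_one]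
      show dist (α 0) (γb (s₀+1)) + dist (α 0) (γb (s₀-1)) ≤
        dist (α t) (γb (s₀+1)) + dist (α t) (γb (s₀-1))
      rw [h3, h4]
      linarith
    have hsum0 : D + D3 = 0 := hmin.hasDerivAt_eq_zero (hDer1.add hDer3)
    have hDer2 : HasDerivAt (fun t => dist (α t) (γb (-1))) (-D) 0 := by
      have hval : deriv (fun t => dist (α t) (γb (-1))) 0 = -D := by
        rw [he2]; linarith
      rw [← hval]
      exact hdm1.hasDerivAt
    intro ξ hξ hξγ
    obtain ⟨hlip, hfull⟩ := key ξ hξ hξγ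
    have hub : ∀ t, ξ (α t) ≤ dist (α t) (γb (s₀+1)) - (s₀+1) := by
      intro t
      have h := hlip (α t) (γb (s₀+1))
      rw [hfull (s₀+1)] at h
      linarith
    have hlb : ∀ t, 1 - dist (α t) (γb (-1)) ≤ ξ (α t) := by
      intro t
      have h := hlip (γb (-1)) (α t)
      rw [hfull (-1), dist_comm] at h
      norm_num at h
      linarith
    have h00 : ξ (α 0) = -s₀ := by rw [hα0', hfull]
    have hf0 : dist (α 0) (γb (s₀+1)) - (s₀+1) = -s₀ := by
      rw [hα0', hdγb, show s₀ - (s₀+1) = (-1:ℝ) by ring, abs_neg, abs_one]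
      ring
    have hg0 : 1 - dist (α 0) (γb (-1)) = -s₀ := by
      rw [hα0', hdγb, show s₀ - (-1:ℝ) = s₀ + 1 by ring, abs_of_nonneg (by linarith)]
      ring
    exact hasDerivAt_of_squeeze
      (hDer1.sub_const (s₀+1))
      (by simpa using hDer2.const_sub 1)
      (hf0.trans h00.symm)
      (hg0.trans h00.symm)
      hlb hub
end

section
/- Let (X, d) be a proper, uniquely geodesic, straight metric space which is C¹ along geodesics and has constant distance variation, with basepoint b. Suppose f and g lie in the horoboundary of X and that for every p ∈ X there exists a geodesic ray γ_p based at p such that f(γ_p(t)) = f(p) − t and g(γ_p(t)) = g(p) − t for all t ≥ 0 (i.e. f and g have the same optimal geodesic ray through every point of X). Then f = g. -/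
open Filter Topology
open scoped NNReal ENNReal

variable {X : Type*} [MetricSpace X]

section AuxiliaryLemmas

open MeasureTheory intervalIntegral

/-- Analytic lemma: a Lipschitz function with a.e. vanishing derivative is constant. -/
theorem aux_eq_of_ae_hasDerivAt_zero {H : ℝ → ℝ} (hlip : LipschitzWith 2 H)
    (hae : ∀ᵐ t : ℝ, HasDerivAt H 0 t) {a c : ℝ} (hac : a ≤ c) : H c = H a := by
  have Hcont : Continuous H := hlip.continuous
  set h : ℕ → ℝ := fun n => ((n : ℝ) + 1)⁻¹ with hh
  have hpos : ∀ n, 0 < h n := fun n => by positivity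
  have hlim : Tendsto h atTop (𝓝 0) := tendsto_one_div_add_atTop_nhds_zero_nat.congr
      (fun n => by simp [hh, one_div])
  -- the sequence `v + h n` tends to `v` within `≠ v`
  have hseq : ∀ v : ℝ, Tendsto (fun n => v + h n) atTop (𝓝[≠] v) := by
    intro v
    apply tendsto_nhdsWithin_of_tendsto_nhds_of_eventually_within
    · simpa using tendsto_const_nhds.add hlim
    · exact Eventually.of_forall fun n => by
        simp [Set.mem_compl_iff, (hpos n).ne']
  -- boundary term limits
  have hbdry : ∀ v : ℝ, Tendsto (fun n => (∫ t in v..(v + h n), H t) / h n) atTop (𝓝 (H v)) := by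
    intro v
    have hF : HasDerivAt (fun u => ∫ t in v..u, H t) (H v) v :=
      integral_hasDerivAt_right (Hcont.intervalIntegrable v v)
        (Hcont.stronglyMeasurableAtFilter _ _) Hcont.continuousAt
    have := (hasDerivAt_iff_tendsto_slope.mp hF).comp (hseq v)
    refine this.congr fun n => ?_
    simp only [Function.comp, slope_def_field, integral_same]
    ring
  -- integral of difference quotients
  set Q : ℕ → ℝ → ℝ := fun n t => (H (t + h n) - H t) / h n with hQ
  have hQcont : ∀ n, Continuous (Q n) :=
    fun n => ((Hcont.comp (continuous_id.add continuous_const)).sub Hcont).div_const _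
  have hIeq : ∀ n, (∫ t in a..c, Q n t) =
      (∫ t in c..(c + h n), H t) / h n - (∫ t in a..(a + h n), H t) / h n := by
    intro n
    have i1 : IntervalIntegrable (fun t => H (t + h n)) volume a c :=
      (Hcont.comp (continuous_id.add continuous_const)).intervalIntegrable _ _
    have i2 : IntervalIntegrable H volume a c := Hcont.intervalIntegrable _ _
    have e0 : (∫ t in a..c, Q n t)
        = ((∫ t in a..c, H (t + h n)) - ∫ t in a..c, H t) / h n := by
      simp only [hQ]
      rw [intervalIntegral.integral_div, integral_sub i1 i2]
    have e1 : (∫ t in a..c, H (t + h n)) = ∫ t in (a + h n)..(c + h n), H t :=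
      integral_comp_add_right H (h n)
    have e2 : (∫ t in a..(a + h n), H t) + (∫ t in (a + h n)..(c + h n), H t)
        = ∫ t in a..(c + h n), H t :=
      integral_add_adjacent_intervals (Hcont.intervalIntegrable _ _)
        (Hcont.intervalIntegrable _ _)
    have e3 : (∫ t in a..c, H t) + (∫ t in c..(c + h n), H t) = ∫ t in a..(c + h n), H t :=
      integral_add_adjacent_intervals (Hcont.intervalIntegrable _ _)
        (Hcont.intervalIntegrable _ _)
    rw [e0, e1]
    field_simp
    congr 1
    linarith
  -- dominated convergence
  have hDCT : Tendsto (fun n => ∫ t in a..c, Q n t) atTop (𝓝 (∫ t in a..c, (0:ℝ))) := by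
    apply intervalIntegral.tendsto_integral_filter_of_dominated_convergence (fun _ => (2:ℝ))
    · exact Eventually.of_forall fun n => (hQcont n).aestronglyMeasurable
    · refine Eventually.of_forall fun n => Eventually.of_forall fun t _ => ?_
      have hd : dist (H (t + h n)) (H t) ≤ 2 * dist (t + h n) t := by
        simpa using hlip.dist_le_mul (t + h n) t
      rw [Real.dist_eq, Real.dist_eq] at hd
      have h1 : |t + h n - t| = h n := by
        rw [add_sub_cancel_left, abs_of_pos (hpos n)]
      rw [h1] at hd
      have : |Q n t| ≤ 2 := by
        rw [hQ]
        simp only [abs_div, abs_of_pos (hpos n)]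
        rw [div_le_iff₀ (hpos n)]
        linarith
      simpa [Real.norm_eq_abs] using this
    · exact intervalIntegrable_const
    · refine hae.mono fun t ht _ => ?_
      have := (hasDerivAt_iff_tendsto_slope.mp ht).comp (hseq t)
      refine this.congr fun n => ?_
      simp only [Function.comp, slope_def_field, hQ]
      ring_nf
  rw [intervalIntegral.integral_zero] at hDCT
  have hDiff : Tendsto (fun n => (∫ t in c..(c + h n), H t) / h n
      - (∫ t in a..(a + h n), H t) / h n) atTop (𝓝 (H c - H a)) :=
    (hbdry c).sub (hbdry a)
  have := tendsto_nhds_unique ((hDCT.congr hIeq)) hDiff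
  linarith

/-- If `φ` is globally supported above by `u` with touching at `τ`, and both are
differentiable at `τ`, their derivatives agree. -/
lemma aux_deriv_eq_of_upper_support {φ u : ℝ → ℝ} {τ : ℝ} (hφ : DifferentiableAt ℝ φ τ)
    (hu : DifferentiableAt ℝ u τ) (hsupp : ∀ t, φ t - u t ≤ φ τ - u τ) :
    deriv φ τ = deriv u τ := by
  have hmax : IsLocalMax (fun t => φ t - u t) τ := Filter.Eventually.of_forall hsupp
  have h0 := hmax.deriv_eq_zero
  rw [deriv_fun_sub hφ hu] at h0
  linarith

/-- If `φ` is locally exactly linear with slope `-ε` on the `ε` side of `τ` and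
differentiable at `τ`, then its derivative there is `-ε`. -/
lemma aux_deriv_eq_neg_eps {φ : ℝ → ℝ} {τ ε : ℝ} (hd : DifferentiableAt ℝ φ τ)
    (hε : ε = 1 ∨ ε = -1) (hlin : ∀ u ∈ Set.Ioo (0:ℝ) 1, φ (τ + ε * u) = φ τ - u) :
    deriv φ τ = -ε := by
  have hslope := hasDerivAt_iff_tendsto_slope.mp hd.hasDerivAt
  rcases hε with rfl | rfl
  · have hsub : Set.Ioo τ (τ + 1) ⊆ {x | x ≠ τ} := fun x hx => ne_of_gt hx.1
    have h1 : Tendsto (slope φ τ) (𝓝[Set.Ioo τ (τ+1)] τ) (𝓝 (deriv φ τ)) :=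
      hslope.mono_left (nhdsWithin_mono τ hsub)
    have h2 : Tendsto (slope φ τ) (𝓝[Set.Ioo τ (τ+1)] τ) (𝓝 (-1)) := by
      apply Tendsto.congr' _ tendsto_const_nhds
      filter_upwards [self_mem_nhdsWithin] with t ht
      have hu : t - τ ∈ Set.Ioo (0:ℝ) 1 := ⟨by linarith [ht.1], by linarith [ht.2]⟩
      have := hlin (t - τ) hu
      rw [one_mul] at this
      have ht' : τ + (t - τ) = t := by ring
      rw [ht'] at this
      rw [slope_def_field, this]
      have : t - τ ≠ 0 := by have := hu.1; linarith
      field_simp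
      ring
    have hne : (𝓝[Set.Ioo τ (τ+1)] τ).NeBot := by
      rw [nhdsWithin_Ioo_eq_nhdsGT (by linarith : τ < τ + 1)]
      infer_instance
    exact tendsto_nhds_unique h1 h2
  · have hsub : Set.Ioo (τ - 1) τ ⊆ {x | x ≠ τ} := fun x hx => ne_of_lt hx.2
    have h1 : Tendsto (slope φ τ) (𝓝[Set.Ioo (τ-1) τ] τ) (𝓝 (deriv φ τ)) :=
      hslope.mono_left (nhdsWithin_mono τ hsub)
    have h2 : Tendsto (slope φ τ) (𝓝[Set.Ioo (τ-1) τ] τ) (𝓝 1) := by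
      apply Tendsto.congr' _ tendsto_const_nhds
      filter_upwards [self_mem_nhdsWithin] with t ht
      have hu : τ - t ∈ Set.Ioo (0:ℝ) 1 := ⟨by linarith [ht.2], by linarith [ht.1]⟩
      have := hlin (τ - t) hu
      have ht' : τ + (-1) * (τ - t) = t := by ring
      rw [ht'] at this
      rw [slope_def_field, this]
      have : t - τ ≠ 0 := by have := hu.1; intro h; apply absurd h; intro h'; linarith
      field_simp
      ring
    have hne : (𝓝[Set.Ioo (τ-1) τ] τ).NeBot := by
      rw [nhdsWithin_Ioo_eq_nhdsLT (by linarith : τ - 1 < τ)]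
      infer_instance
    have := tendsto_nhds_unique h1 h2
    rw [this]; norm_num

/-- Key geometric lemma: along any bi-infinite geodesic, `f - g` has a.e. vanishing
derivative. -/
lemma aux_ae_hasDerivAt_zero (hU : UniquelyGeodesic X) (hC1 : C1AlongGeodesics X)
    {f g : C(X, ℝ)}
    (hfl : ∀ y y' : X, dist (f y) (f y') ≤ dist y y')
    (hgl : ∀ y y' : X, dist (g y) (g y') ≤ dist y y')
    (hcommon : ∀ p : X, ∃ γ : GeodesicRay X p,
      (∀ t : ℝ≥0, f (γ.1 t) = f p - (t : ℝ)) ∧ (∀ t : ℝ≥0, g (γ.1 t) = g p - (t : ℝ)))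
    {σ : ℝ → X} (hσ : Isometry σ) :
    ∀ᵐ τ : ℝ, HasDerivAt (fun t => f (σ t) - g (σ t)) 0 τ := by
  set φ : ℝ → ℝ := fun t => f (σ t) with hφdef
  set ψ : ℝ → ℝ := fun t => g (σ t) with hψdef
  have hφl : LipschitzWith 1 φ := LipschitzWith.of_dist_le_mul fun s t => by
    calc dist (φ s) (φ t) ≤ dist (σ s) (σ t) := hfl _ _
    _ = 1 * dist s t := by rw [hσ.dist_eq, one_mul]
  have hψl : LipschitzWith 1 ψ := LipschitzWith.of_dist_le_mul fun s t => by
    calc dist (ψ s) (ψ t) ≤ dist (σ s) (σ t) := hgl _ _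
    _ = 1 * dist s t := by rw [hσ.dist_eq, one_mul]
  filter_upwards [hφl.ae_differentiableAt (μ := volume), hψl.ae_differentiableAt (μ := volume)]
    with τ hφd hψd
  -- it suffices to show the derivatives agree
  suffices h : deriv φ τ = deriv ψ τ by
    have := (hφd.hasDerivAt).sub (hψd.hasDerivAt)
    rwa [h, sub_self] at this
  set p := σ τ with hp
  obtain ⟨γ, hfγ, hgγ⟩ := hcommon p
  set w := γ.1 (1 : ℝ≥0) with hw
  have hγiso : Isometry ⇑γ.1 := γ.2.1
  have hγ0 : γ.1 0 = p := γ.2.2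
  have hpw : dist p w = 1 := by
    rw [← hγ0, hw, hγiso.dist_eq]
    rw [NNReal.dist_eq]
    norm_num
  have hfw : f w = f p - 1 := by simpa using hfγ 1
  have hgw : g w = g p - 1 := by simpa using hgγ 1
  by_cases hrange : w ∈ Set.range σ
  · -- the ray starts along σ
    obtain ⟨r, hr⟩ := hrange
    have habs : |r - τ| = 1 := by
      have := hσ.dist_eq r τ
      rw [Real.dist_eq] at this
      rw [← this, hr, ← hp, dist_comm, hpw]
    have hε : r - τ = 1 ∨ r - τ = -1 := (abs_eq (by norm_num)).mp habs
    set ε := r - τ with hεdef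
    have hpow : p ≠ w := by
      intro h
      rw [h, dist_self] at hpw
      norm_num at hpw
    obtain ⟨γ₀, hγ₀props, huniq⟩ := hU p w hpow
    -- two geodesics from p to w
    have habs1 : |ε| = 1 := habs
    have hc₁ : IsGeodesicOn (fun u : ℝ => σ (τ + ε * u)) (Set.Icc 0 (dist p w)) ∧
        σ (τ + ε * 0) = p ∧ σ (τ + ε * dist p w) = w := by
      refine ⟨fun u _ v _ => ?_, by rw [mul_zero, add_zero], ?_⟩
      swap
      · have harg : τ + ε * dist p w = r := by rw [hpw, mul_one, hεdef]; ring
        rw [harg]; exact hr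
      rw [hσ.dist_eq, Real.dist_eq]
      have : τ + ε * u - (τ + ε * v) = ε * (u - v) := by ring
      rw [this, abs_mul, habs1, one_mul]
    have hc₂ : IsGeodesicOn (fun u : ℝ => γ.1 (Real.toNNReal u)) (Set.Icc 0 (dist p w)) ∧
        γ.1 (Real.toNNReal 0) = p ∧ γ.1 (Real.toNNReal (dist p w)) = w := by
      refine ⟨fun u hu v hv => ?_, by simp only [Real.toNNReal_zero]; exact hγ0,
        by rw [hpw]; simp only [Real.toNNReal_one]; rfl⟩
      rw [hγiso.dist_eq, NNReal.dist_eq, Real.coe_toNNReal u hu.1, Real.coe_toNNReal v hv.1]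
    have heq : ∀ u ∈ Set.Icc (0:ℝ) 1, σ (τ + ε * u) = γ.1 (Real.toNNReal u) := by
      intro u hu
      have hu' : u ∈ Set.Icc 0 (dist p w) := by rwa [hpw]
      have e1 := huniq _ hc₁ hu'
      have e2 := huniq _ hc₂ hu'
      exact e1.trans e2.symm
    have hlinφ : ∀ u ∈ Set.Ioo (0:ℝ) 1, φ (τ + ε * u) = φ τ - u := by
      intro u hu
      have hequ := heq u ⟨le_of_lt hu.1, le_of_lt hu.2⟩
      have e1 : φ (τ + ε * u) = f (γ.1 (Real.toNNReal u)) := by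
        show f (σ (τ + ε * u)) = _
        rw [hequ]
      have e2 : φ τ = f p := rfl
      rw [e1, e2, hfγ (Real.toNNReal u), Real.coe_toNNReal u (le_of_lt hu.1)]
    have hlinψ : ∀ u ∈ Set.Ioo (0:ℝ) 1, ψ (τ + ε * u) = ψ τ - u := by
      intro u hu
      have hequ := heq u ⟨le_of_lt hu.1, le_of_lt hu.2⟩
      have e1 : ψ (τ + ε * u) = g (γ.1 (Real.toNNReal u)) := by
        show g (σ (τ + ε * u)) = _
        rw [hequ]
      have e2 : ψ τ = g p := rfl
      rw [e1, e2, hgγ (Real.toNNReal u), Real.coe_toNNReal u (le_of_lt hu.1)]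
    rw [aux_deriv_eq_neg_eps hφd hε hlinφ, aux_deriv_eq_neg_eps hψd hε hlinψ]
  · -- the ray leaves σ: use C¹ support function
    set u : ℝ → ℝ := fun t => dist (σ t) w with hu
    have hud : DifferentiableAt ℝ u τ := (hC1 σ hσ).1 w hrange τ
    have hsuppφ : ∀ t, φ t - u t ≤ φ τ - u τ := by
      intro t
      have h1 : f (σ t) - f w ≤ dist (σ t) w := by
        have := hfl (σ t) w
        rw [Real.dist_eq] at this
        exact le_trans (le_abs_self _) this
      have h2 : u τ = 1 := by rw [hu]; simp only; rw [← hp, hpw]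
      rw [h2]
      have e2 : φ τ = f p := rfl
      rw [e2]
      have e4 : φ t = f (σ t) := rfl
      have e5 : u t = dist (σ t) w := rfl
      rw [e4, e5]
      rw [hfw] at h1
      linarith
    have hsuppψ : ∀ t, ψ t - u t ≤ ψ τ - u τ := by
      intro t
      have h1 : g (σ t) - g w ≤ dist (σ t) w := by
        have := hgl (σ t) w
        rw [Real.dist_eq] at this
        exact le_trans (le_abs_self _) this
      have h2 : u τ = 1 := by rw [hu]; simp only; rw [← hp, hpw]
      rw [h2]
      have e2 : ψ τ = g p := rfl
      rw [e2]
      have e4 : ψ t = g (σ t) := rfl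
      have e5 : u t = dist (σ t) w := rfl
      rw [e4, e5]
      rw [hgw] at h1
      linarith
    rw [aux_deriv_eq_of_upper_support hφd hud hsuppφ,
      aux_deriv_eq_of_upper_support hψd hud hsuppψ]

/-- Every element of the closure of the horofunction embedding is 1-Lipschitz
and vanishes at the basepoint. -/
lemma aux_mem_closure_horo_prop (b : X) {F : C(X, ℝ)}
    (hF : F ∈ closure (Set.range (horo b))) :
    (∀ y y' : X, dist (F y) (F y') ≤ dist y y') ∧ F b = 0 := by
  have hclosed : IsClosed {G : C(X, ℝ) | (∀ y y' : X, dist (G y) (G y') ≤ dist y y') ∧ G b = 0} := by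
    have hrw : {G : C(X, ℝ) | (∀ y y' : X, dist (G y) (G y') ≤ dist y y') ∧ G b = 0} =
        (⋂ (y : X) (y' : X), {G : C(X, ℝ) | dist (G y) (G y') ≤ dist y y'}) ∩
          {G : C(X, ℝ) | G b = 0} := by
      ext G
      simp only [Set.mem_setOf_eq, Set.mem_inter_iff, Set.mem_iInter]
    rw [hrw]
    refine IsClosed.inter (isClosed_iInter fun y => isClosed_iInter fun y' => ?_)
      (isClosed_eq (continuous_eval_const b) continuous_const)
    exact isClosed_le
      ((continuous_eval_const y).dist (continuous_eval_const y'))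
      continuous_const
  have hsub : Set.range (horo b) ⊆
      {G : C(X, ℝ) | (∀ y y' : X, dist (G y) (G y') ≤ dist y y') ∧ G b = 0} := by
    rintro _ ⟨x, rfl⟩
    constructor
    · intro y y'
      have e : (horo b x) y = dist x y - dist x b := rfl
      have e' : (horo b x) y' = dist x y' - dist x b := rfl
      rw [e, e', Real.dist_eq]
      have e2 : dist x y - dist x b - (dist x y' - dist x b) = dist x y - dist x y' := by ring
      rw [e2]
      have h3 := abs_dist_sub_le y y' x
      simpa [dist_comm] using h3
    · show dist x b - dist x b = 0
      ring
  exact closure_minimal hsub hclosed hF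


end AuxiliaryLemmas

/-- If two horofunctions `f` and `g` admit, through every point `p` of `X`, a
common optimal geodesic ray (one along which both decrease with unit speed from their value
at `p`), then `f = g`. -/
theorem statement17 [ProperSpace X] (hU : UniquelyGeodesic X) (hS : Straight X)
    (hC1 : C1AlongGeodesics X) (hCDV : ConstantDistanceVariation X) (b : X)
    (f g : C(X, ℝ)) (hf : f ∈ horoboundary b) (hg : g ∈ horoboundary b)
    (hcommon : ∀ p : X, ∃ γ : GeodesicRay X p,
      (∀ t : ℝ≥0, f (γ.1 t) = f p - (t : ℝ)) ∧ (∀ t : ℝ≥0, g (γ.1 t) = g p - (t : ℝ))) :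
    f = g := by
  obtain ⟨hfl, hfb⟩ := aux_mem_closure_horo_prop b hf.1
  obtain ⟨hgl, hgb⟩ := aux_mem_closure_horo_prop b hg.1
  ext y
  by_cases hyb : y = b
  · rw [hyb, hfb, hgb]
  · have hby : b ≠ y := fun h => hyb h.symm
    obtain ⟨γ₀, ⟨hgeo, hγ₀0, hγ₀1⟩, -⟩ := hU b y hby
    have hd : 0 < dist b y := dist_pos.mpr hby
    obtain ⟨σ, ⟨hσiso, hσeq⟩, -⟩ := hS γ₀ 0 (dist b y) hd hgeo
    have hσ0 : σ 0 = b := by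
      rw [hσeq (Set.left_mem_Icc.mpr hd.le), hγ₀0]
    have hσ1 : σ (dist b y) = y := by
      rw [hσeq (Set.right_mem_Icc.mpr hd.le), hγ₀1]
    have hHlip : LipschitzWith 2 (fun t => f (σ t) - g (σ t)) := by
      apply LipschitzWith.of_dist_le_mul
      intro s t
      have h1 := hfl (σ s) (σ t)
      have h2 := hgl (σ s) (σ t)
      have e : dist (σ s) (σ t) = dist s t := hσiso.dist_eq s t
      rw [e] at h1 h2
      rw [Real.dist_eq] at h1 h2 ⊢
      have h3 : |f (σ s) - g (σ s) - (f (σ t) - g (σ t))|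
          ≤ |f (σ s) - f (σ t)| + |g (σ s) - g (σ t)| := by
        have e4 : f (σ s) - g (σ s) - (f (σ t) - g (σ t))
            = (f (σ s) - f (σ t)) - (g (σ s) - g (σ t)) := by ring
        rw [e4]
        exact abs_sub _ _
      have h4 : ((2 : ℝ≥0) : ℝ) = 2 := by norm_num
      rw [h4, Real.dist_eq]
      rw [Real.dist_eq] at h1 h2
      linarith
    have hae := aux_ae_hasDerivAt_zero hU hC1 hfl hgl hcommon hσiso
    have hconst := aux_eq_of_ae_hasDerivAt_zero hHlip hae hd.le
    have e0 : f (σ 0) - g (σ 0) = 0 := by rw [hσ0, hfb, hgb]; ring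
    have e1 : f (σ (dist b y)) - g (σ (dist b y)) = f y - g y := by rw [hσ1]
    have : f y - g y = 0 := by
      rw [← e1]
      rw [hconst, e0]
    linarith
end
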